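/- arXiv:2004.08675 — 7 statements merged into one kernel-verified Lean document; each statement's English description precedes it below -/
import Mathlib

section
/- Let N ≥ 1 and let Q be a real N×N orthogonal matrix with det Q = (−1)^N. Then there exist nonzero vectors v^(1), …, v^(N) ∈ ℝ^N such that Q = H(v^(1)) · H(v^(2)) · ⋯ · H(v^(N)). -/
open scoped BigOperators Matrix

/-- The Householder reflection `H(v) = I - 2 v vᵀ / ‖v‖₂²`. -/
noncomputable def householder {N : ℕ} (v : Fin N → ℝ) : Matrix (Fin N) (Fin N) ℝ :=
  (1 : Matrix (Fin N) (Fin N) ℝ) - (2 / ∑ k, v k ^ 2) • Matrix.vecMulVec v v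

open Matrix


lemma HH_sum_sq_pos {N : ℕ} {v : Fin N → ℝ} (hv : v ≠ 0) : 0 < ∑ k, v k ^ 2 := by
  obtain ⟨i, hi⟩ := Function.ne_iff.mp hv
  have hi' : v i ≠ 0 := by simpa using hi
  exact Finset.sum_pos' (fun k _ => sq_nonneg _) ⟨i, Finset.mem_univ _, by positivity⟩

lemma HH_apply {N : ℕ} (v : Fin N → ℝ) (i j : Fin N) :
    householder v i j = (if i = j then 1 else 0) - (2 / ∑ k, v k ^ 2) * (v i * v j) := by
  simp [householder, Matrix.one_apply, Matrix.vecMulVec_apply]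

lemma HH_transpose {N : ℕ} (v : Fin N → ℝ) : (householder v)ᵀ = householder v := by
  ext i j
  by_cases h : i = j
  · subst h; rfl
  · rw [Matrix.transpose_apply, HH_apply, HH_apply, if_neg h, if_neg (Ne.symm h)]
    ring

lemma HH_vecMulVec_sq {N : ℕ} (v : Fin N → ℝ) :
    Matrix.vecMulVec v v * Matrix.vecMulVec v v = (∑ k, v k ^ 2) • Matrix.vecMulVec v v := by
  ext i j
  simp only [Matrix.mul_apply, Matrix.vecMulVec_apply, Matrix.smul_apply, smul_eq_mul,
    Finset.sum_mul]
  exact Finset.sum_congr rfl fun k _ => by ring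

lemma HH_mul_self {N : ℕ} {v : Fin N → ℝ} (hv : v ≠ 0) :
    householder v * householder v = 1 := by
  have hs : (∑ k, v k ^ 2) ≠ 0 := (HH_sum_sq_pos hv).ne'
  have h2 : (2 / ∑ k, v k ^ 2) * (2 / ∑ k, v k ^ 2) * (∑ k, v k ^ 2)
      = 2 * (2 / ∑ k, v k ^ 2) := by field_simp
  calc householder v * householder v
      = 1 - (2 / ∑ k, v k ^ 2) • Matrix.vecMulVec v v
          - ((2 / ∑ k, v k ^ 2) • Matrix.vecMulVec v v
            - ((2 / ∑ k, v k ^ 2) * (2 / ∑ k, v k ^ 2)) • (Matrix.vecMulVec v v * Matrix.vecMulVec v v)) := by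
        rw [householder, sub_mul, one_mul, mul_sub, mul_one, _root_.Matrix.smul_mul, _root_.Matrix.mul_smul,
          smul_smul]
    _ = 1 := by
        rw [HH_vecMulVec_sq, smul_smul, h2, mul_smul, two_smul]
        abel

lemma HH_det {N : ℕ} {v : Fin N → ℝ} (hv : v ≠ 0) : (householder v).det = -1 := by
  have hs : (∑ k, v k ^ 2) ≠ 0 := (HH_sum_sq_pos hv).ne'
  have key : householder v
      = 1 + Matrix.replicateCol Unit ((-(2 / ∑ k, v k ^ 2)) • v) * Matrix.replicateRow Unit v := by
    ext i j
    simp [HH_apply, Matrix.mul_apply, Matrix.one_apply]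
    ring
  rw [key, Matrix.det_one_add_replicateCol_mul_replicateRow]
  have : v ⬝ᵥ ((-(2 / ∑ k, v k ^ 2)) • v) = -(2 / ∑ k, v k ^ 2) * ∑ k, v k ^ 2 := by
    simp [dotProduct, Finset.mul_sum]
    exact Finset.sum_congr rfl fun k _ => by ring
  rw [this]
  field_simp
  ring

lemma HH_mulVec {N : ℕ} (v w : Fin N → ℝ) (i : Fin N) :
    (householder v *ᵥ w) i
      = w i - ((2 / ∑ k, v k ^ 2) * ∑ k, v k * w k) * v i := by
  simp only [Matrix.mulVec, dotProduct, HH_apply, sub_mul, Finset.sum_sub_distrib,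
    ite_mul, one_mul, zero_mul, Finset.sum_ite_eq, Finset.mem_univ, if_pos]
  congr 1
  rw [Finset.mul_sum, Finset.sum_mul]
  exact Finset.sum_congr rfl fun k _ => by ring

lemma HH_reflect_col {N : ℕ} {w : Fin (N + 1) → ℝ} (hw : ∑ k, w k ^ 2 = 1)
    (hne : w ≠ fun j => if j = 0 then 1 else 0) (i : Fin (N + 1)) :
    (householder (w - fun j => if j = 0 then 1 else 0) *ᵥ w) i
      = if i = 0 then 1 else 0 := by
  set e : Fin (N + 1) → ℝ := fun j => if j = 0 then 1 else 0 with he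
  have hsumew : ∑ k, e k * w k = w 0 := by
    simp [he, ite_mul]
  have hsumwe : ∑ k, w k * e k = w 0 := by
    simp [he, mul_ite]
  have hsumee : ∑ k, e k ^ 2 = 1 := by
    have : ∀ k : Fin (N + 1), e k ^ 2 = if k = 0 then 1 else 0 := by
      intro k; simp only [he]; split_ifs <;> norm_num
    rw [Finset.sum_congr rfl fun k _ => this k]
    simp
  have hw0 : w 0 ≠ 1 := by
    intro h1
    apply hne
    rw [Fin.sum_univ_succ] at hw
    have hrest : ∑ j : Fin N, w j.succ ^ 2 = 0 := by
      rw [h1] at hw; norm_num at hw; linarith [hw]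
    have hzero : ∀ j : Fin N, w j.succ = 0 := by
      intro j
      have := (Finset.sum_eq_zero_iff_of_nonneg (fun k _ => sq_nonneg (w k.succ))).mp hrest j
        (Finset.mem_univ j)
      exact pow_eq_zero_iff (n := 2) (by norm_num) |>.mp this
    funext j
    refine Fin.cases ?_ (fun j' => ?_) j
    · simpa [he] using h1
    · simp [he, Fin.succ_ne_zero, hzero j']
  have hvw : ∑ k, (w - e) k * w k = 1 - w 0 := by
    have : ∑ k, (w - e) k * w k = (∑ k, w k ^ 2) - ∑ k, e k * w k := by
      rw [← Finset.sum_sub_distrib]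
      exact Finset.sum_congr rfl fun k _ => by simp [Pi.sub_apply]; ring
    rw [this, hw, hsumew]
  have hvv : ∑ k, (w - e) k ^ 2 = 2 * (1 - w 0) := by
    have : ∑ k, (w - e) k ^ 2
        = (∑ k, w k ^ 2) - 2 * (∑ k, w k * e k) + ∑ k, e k ^ 2 := by
      rw [Finset.mul_sum, ← Finset.sum_sub_distrib, ← Finset.sum_add_distrib]
      exact Finset.sum_congr rfl fun k _ => by simp [Pi.sub_apply]; ring
    rw [this, hw, hsumwe, hsumee]; ring
  rw [HH_mulVec, hvv, hvw]
  have h10 : (1 : ℝ) - w 0 ≠ 0 := sub_ne_zero_of_ne (Ne.symm hw0)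
  have hcoef : 2 / (2 * (1 - w 0)) * (1 - w 0) = 1 := by field_simp
  rw [hcoef, one_mul, Pi.sub_apply]
  simp [he]

/-- Embed an `N × N` matrix as the lower-right block of `1 ⊕ A`. -/
def HHlift {N : ℕ} (A : Matrix (Fin N) (Fin N) ℝ) : Matrix (Fin (N + 1)) (Fin (N + 1)) ℝ :=
  Matrix.of fun i j =>
    Fin.cases (Fin.cases 1 (fun _ => (0 : ℝ)) j)
      (fun i' => Fin.cases 0 (fun j' => A i' j') j) i

@[simp] lemma HHlift_zero_zero {N : ℕ} (A : Matrix (Fin N) (Fin N) ℝ) :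
    HHlift A 0 0 = 1 := rfl

@[simp] lemma HHlift_zero_succ {N : ℕ} (A : Matrix (Fin N) (Fin N) ℝ) (j : Fin N) :
    HHlift A 0 j.succ = 0 := by simp [HHlift]

@[simp] lemma HHlift_succ_zero {N : ℕ} (A : Matrix (Fin N) (Fin N) ℝ) (i : Fin N) :
    HHlift A i.succ 0 = 0 := by simp [HHlift]

@[simp] lemma HHlift_succ_succ {N : ℕ} (A : Matrix (Fin N) (Fin N) ℝ) (i j : Fin N) :
    HHlift A i.succ j.succ = A i j := by simp [HHlift]

lemma HHlift_mul {N : ℕ} (A B : Matrix (Fin N) (Fin N) ℝ) :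
    HHlift A * HHlift B = HHlift (A * B) := by
  ext i j
  refine Fin.cases ?_ (fun i' => ?_) i <;> refine Fin.cases ?_ (fun j' => ?_) j <;>
    simp [Matrix.mul_apply, Fin.sum_univ_succ]

lemma HHlift_list_prod {N : ℕ} (l : List (Matrix (Fin N) (Fin N) ℝ)) :
    HHlift l.prod = (l.map HHlift).prod := by
  induction l with
  | nil =>
    simp only [List.prod_nil, List.map_nil]
    ext i j
    refine Fin.cases ?_ (fun i' => ?_) i <;> refine Fin.cases ?_ (fun j' => ?_) j <;>
      simp [Matrix.one_apply, Fin.succ_ne_zero, (Fin.succ_ne_zero _).symm, Fin.succ_inj]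
  | cons a t ih => simp only [List.prod_cons, List.map_cons, ← HHlift_mul, ih]

lemma HHlift_det {N : ℕ} (A : Matrix (Fin N) (Fin N) ℝ) :
    (HHlift A).det = A.det := by
  rw [Matrix.det_succ_row_zero, Fin.sum_univ_succ]
  have hsub : (HHlift A).submatrix Fin.succ Fin.succ = A := by
    ext i j; simp
  simp [hsub]

lemma HHlift_householder {N : ℕ} (v : Fin N → ℝ) :
    HHlift (householder v) = householder (Fin.cons 0 v) := by
  have hs : ∑ k, (Fin.cons (0:ℝ) v : Fin (N+1) → ℝ) k ^ 2 = ∑ k, v k ^ 2 := by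
    rw [Fin.sum_univ_succ]; simp
  ext i j
  refine Fin.cases ?_ (fun i' => ?_) i <;> refine Fin.cases ?_ (fun j' => ?_) j <;>
    simp [HH_apply, hs, Fin.succ_ne_zero, (Fin.succ_ne_zero _).symm, Fin.succ_inj]

lemma HHlift_one {N : ℕ} : HHlift (1 : Matrix (Fin N) (Fin N) ℝ) = 1 := by
  ext i j
  refine Fin.cases ?_ (fun i' => ?_) i <;> refine Fin.cases ?_ (fun j' => ?_) j <;>
    simp [Matrix.one_apply, Fin.succ_ne_zero, (Fin.succ_ne_zero _).symm, Fin.succ_inj]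

lemma HHlift_prod_ofFn {N n : ℕ} (g : Fin n → Matrix (Fin N) (Fin N) ℝ) :
    (List.ofFn fun i => HHlift (g i)).prod = HHlift (List.ofFn g).prod := by
  induction n with
  | zero => simp [HHlift_one]
  | succ n ih =>
    rw [List.ofFn_succ, List.ofFn_succ (f := g), List.prod_cons, List.prod_cons,
      ih (fun i => g i.succ), HHlift_mul]

lemma HH_step {N : ℕ}
    (ih : ∀ Q' : Matrix (Fin N) (Fin N) ℝ, Q'ᵀ * Q' = 1 → Q'.det = (-1 : ℝ) ^ N →
      ∃ v : Fin N → Fin N → ℝ, (∀ l, v l ≠ 0) ∧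
        Q' = (List.ofFn fun l => householder (v l)).prod)
    (Q : Matrix (Fin (N + 1)) (Fin (N + 1)) ℝ) (hQ : Qᵀ * Q = 1)
    (hdet : Q.det = (-1 : ℝ) ^ (N + 1)) (v₀ : Fin (N + 1) → ℝ) (hv₀ : v₀ ≠ 0)
    (hcol : ∀ i, (householder v₀ * Q) i 0 = if i = 0 then 1 else 0) :
    ∃ v : Fin (N + 1) → Fin (N + 1) → ℝ, (∀ l, v l ≠ 0) ∧
      Q = (List.ofFn fun l => householder (v l)).prod := by
  set R := householder v₀ * Q with hRdef
  have hRo : Rᵀ * R = 1 := by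
    rw [hRdef, Matrix.transpose_mul, HH_transpose, Matrix.mul_assoc,
      ← Matrix.mul_assoc (householder v₀), HH_mul_self hv₀, Matrix.one_mul, hQ]
  have hRR : R * Rᵀ = 1 := mul_eq_one_comm.mp hRo
  have hR00 : R 0 0 = 1 := by simpa using hcol 0
  have hrow : ∀ j : Fin N, R 0 j.succ = 0 := by
    have h00 : ∑ k, R 0 k * R 0 k = 1 := by
      have h := Matrix.ext_iff.mpr hRR 0 0
      rw [Matrix.mul_apply] at h
      simpa [Matrix.transpose_apply] using h
    rw [Fin.sum_univ_succ, hR00, one_mul] at h00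
    intro j
    have hz : ∑ j : Fin N, R 0 j.succ * R 0 j.succ = 0 := by linarith
    have := (Finset.sum_eq_zero_iff_of_nonneg
      (fun k _ => mul_self_nonneg (R 0 k.succ))).mp hz j (Finset.mem_univ j)
    exact mul_self_eq_zero.mp this
  have hlift : R = HHlift (R.submatrix Fin.succ Fin.succ) := by
    ext i j
    refine Fin.cases ?_ (fun i' => ?_) i <;> refine Fin.cases ?_ (fun j' => ?_) j
    · simpa using hR00
    · simp [hrow j']
    · simpa [Fin.succ_ne_zero] using hcol i'.succ
    · simp
  have hQ₂o : (R.submatrix Fin.succ Fin.succ)ᵀ * R.submatrix Fin.succ Fin.succ = 1 := by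
    ext i j
    have h := Matrix.ext_iff.mpr hRo i.succ j.succ
    rw [Matrix.mul_apply, Fin.sum_univ_succ] at h
    simp only [Matrix.transpose_apply] at h
    rw [hrow i, zero_mul, zero_add] at h
    rw [Matrix.mul_apply]
    simp only [Matrix.transpose_apply, Matrix.submatrix_apply]
    rw [h]
    simp [Matrix.one_apply, Fin.succ_inj]
  have hdet₂ : (R.submatrix Fin.succ Fin.succ).det = (-1 : ℝ) ^ N := by
    have h1 : R.det = (-1 : ℝ) * (-1 : ℝ) ^ (N + 1) := by
      rw [hRdef, Matrix.det_mul, HH_det hv₀, hdet]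
    have h2 : R.det = (R.submatrix Fin.succ Fin.succ).det := by
      conv_lhs => rw [hlift]
      exact HHlift_det _
    rw [← h2, h1, pow_succ]
    ring
  obtain ⟨v', hv', hprod⟩ := ih _ hQ₂o hdet₂
  refine ⟨Fin.cons v₀ (fun l => Fin.cons 0 (v' l)), ?_, ?_⟩
  · intro l
    refine Fin.cases ?_ (fun l' => ?_) l
    · simpa using hv₀
    · simp only [Fin.cons_succ]
      intro h
      apply hv' l'
      funext j
      have := congrFun h j.succ
      simpa using this
  · have hQR : Q = householder v₀ * R := by
      rw [hRdef, ← Matrix.mul_assoc, HH_mul_self hv₀, Matrix.one_mul]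
    rw [List.ofFn_succ, List.prod_cons]
    simp only [Fin.cons_zero, Fin.cons_succ]
    simp only [← HHlift_householder]
    rw [HHlift_prod_ofFn, ← hprod, ← hlift]
    exact hQR

theorem HH_main : ∀ (N : ℕ) (Q : Matrix (Fin N) (Fin N) ℝ), Qᵀ * Q = 1 →
    Q.det = (-1 : ℝ) ^ N →
    ∃ v : Fin N → Fin N → ℝ, (∀ l, v l ≠ 0) ∧
      Q = (List.ofFn fun l => householder (v l)).prod := by
  intro N
  induction N with
  | zero =>
    intro Q _ _
    refine ⟨fun l => l.elim0, fun l => l.elim0, ?_⟩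
    have : Q = 1 := by ext i j; exact i.elim0
    simp [this]
  | succ N ih =>
    intro Q hQ hdet
    set w : Fin (N + 1) → ℝ := fun i => Q i 0 with hwdef
    have hw : ∑ k, w k ^ 2 = 1 := by
      have h := Matrix.ext_iff.mpr hQ 0 0
      rw [Matrix.mul_apply] at h
      simp only [Matrix.transpose_apply, Matrix.one_apply_eq] at h
      simpa [hwdef, pow_two] using h
    by_cases hne : w = fun j => if j = 0 then 1 else 0
    · cases N with
      | zero =>
        exfalso
        have h00 : Q 0 0 = 1 := by simpa [hwdef] using congrFun hne 0
        rw [Matrix.det_fin_one, h00] at hdet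
        norm_num at hdet
      | succ M =>
        have hQk0 : ∀ k, Q k 0 = if k = 0 then 1 else 0 := fun k => by
          simpa [hwdef] using congrFun hne k
        refine HH_step ih Q hQ hdet
          (Fin.cons 0 (fun j : Fin (M + 1) => if j = 0 then 1 else 0)) ?_ ?_
        · intro h
          have := congrFun h (Fin.succ 0)
          simp [Fin.cons_succ] at this
        · intro i
          rw [← HHlift_householder, Matrix.mul_apply, Fin.sum_univ_succ]
          simp only [hQk0, Fin.succ_ne_zero, if_false, if_pos rfl, mul_zero, mul_one,
            Finset.sum_const_zero, add_zero]
          refine Fin.cases ?_ (fun i' => ?_) i <;>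
            simp [Fin.succ_ne_zero]
    · refine HH_step ih Q hQ hdet (w - fun j => if j = 0 then 1 else 0)
        (sub_ne_zero_of_ne hne) ?_
      intro i
      rw [← HH_reflect_col hw hne i, Matrix.mul_apply]
      simp [Matrix.mulVec, dotProduct, hwdef]

/-- Any `N × N` orthogonal matrix `Q` with `det Q = (-1)^N` (for `N ≥ 1`) is a product of
`N` Householder reflections `H(v⁽¹⁾) ⋯ H(v⁽ᴺ⁾)` with all `v⁽ˡ⁾` nonzero. -/
theorem orthogonal_eq_prod_householder {N : ℕ} (hN : 1 ≤ N)
    (Q : Matrix (Fin N) (Fin N) ℝ) (hQ : Qᵀ * Q = 1) (hdet : Q.det = (-1 : ℝ) ^ N) :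
    ∃ v : Fin N → Fin N → ℝ, (∀ l, v l ≠ 0) ∧
      Q = (List.ofFn fun l => householder (v l)).prod :=
  HH_main N Q hQ hdet
end

section
/- Let v^(1), …, v^(L) ∈ ℝ^N be nonzero vectors, let U ∈ ℝ^{N×L} be the matrix whose l-th column is v^(l)/‖v^(l)‖₂, and let S = (1/2)I + striu(UᵀU). Then S is invertible and H(v^(1)) · ⋯ · H(v^(L)) = I − U S⁻¹ Uᵀ. -/
open scoped BigOperators Matrix

/-- `striu M` zeroes out all diagonal and lower-triangular entries of `M`. -/
def striu {L : ℕ} (M : Matrix (Fin L) (Fin L) ℝ) : Matrix (Fin L) (Fin L) ℝ :=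
  fun i j => if i < j then M i j else 0

open Matrix

def striu' {L : ℕ} (M : Matrix (Fin L) (Fin L) ℝ) : Matrix (Fin L) (Fin L) ℝ :=
  fun i j => if i < j then M i j else 0

def Uof {N L : ℕ} (u : Fin L → Fin N → ℝ) : Matrix (Fin N) (Fin L) ℝ := fun i l => u l i

noncomputable def Sof {N L : ℕ} (u : Fin L → Fin N → ℝ) : Matrix (Fin L) (Fin L) ℝ :=
  (1 / 2 : ℝ) • (1 : Matrix (Fin L) (Fin L) ℝ) + striu' ((Uof u)ᵀ * Uof u)

lemma Sof_apply {N L : ℕ} (u : Fin L → Fin N → ℝ) (i j : Fin L) :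
    Sof u i j = (if i = j then (1:ℝ)/2 else 0) + (if i < j then ∑ k, u i k * u j k else 0) := by
  simp [Sof, striu', Uof, Matrix.add_apply, Matrix.smul_apply, Matrix.one_apply,
    Matrix.mul_apply, Matrix.transpose_apply, mul_ite, mul_one, mul_zero]

lemma cwy_aux {N : ℕ} : ∀ {L : ℕ} (u : Fin L → Fin N → ℝ), (∀ l, ∑ k, u l k ^ 2 = 1) →
    ∃ T : Matrix (Fin L) (Fin L) ℝ,
      Sof u * T = 1 ∧ T * Sof u = 1 ∧
      (List.ofFn fun l => (1 : Matrix (Fin N) (Fin N) ℝ)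
          - (2:ℝ) • Matrix.vecMulVec (u l) (u l)).prod
        = 1 - Uof u * T * (Uof u)ᵀ := by
  intro L
  induction L with
  | zero =>
    intro u hu
    refine ⟨1, Subsingleton.elim _ _, Subsingleton.elim _ _, ?_⟩
    ext a b
    simp [Matrix.mul_apply, Matrix.one_apply]
  | succ L ih =>
    intro u hu
    obtain ⟨T', h1, h2, h3⟩ := ih (fun l => u l.succ) (fun l => hu l.succ)
    set u' : Fin L → Fin N → ℝ := fun l => u l.succ with hu'
    set r : Fin L → ℝ := fun j => ∑ k, u 0 k * u' j k with hrdef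
    set c : Fin L → ℝ := fun j => ∑ k, r k * T' k j with hcdef
    set T : Matrix (Fin (L+1)) (Fin (L+1)) ℝ :=
      Fin.cons (Fin.cons 2 (fun j => -2 * c j))
        (fun i => Fin.cons 0 (fun j => T' i j)) with hT
    have hS00 : Sof u 0 0 = 1/2 := by simp [Sof_apply]
    have hS0s : ∀ j : Fin L, Sof u 0 j.succ = r j := by
      intro j; simp [Sof_apply, (Fin.succ_pos j).ne, Fin.succ_pos, hrdef, hu']
    have hSs0 : ∀ i : Fin L, Sof u i.succ 0 = 0 := by
      intro i; simp [Sof_apply, Fin.succ_ne_zero, (Fin.succ_pos i).asymm]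
    have hSss : ∀ i j : Fin L, Sof u i.succ j.succ = Sof u' i j := by
      intro i j; simp [Sof_apply, Fin.succ_inj, Fin.succ_lt_succ_iff, hu']
    have hcS : ∀ j, ∑ k, c k * Sof u' k j = r j := by
      intro j
      have e1 : ∑ k, c k * Sof u' k j = ∑ m, r m * ∑ k, T' m k * Sof u' k j := by
        simp only [hcdef, Finset.sum_mul, Finset.mul_sum]
        rw [Finset.sum_comm]
        exact Finset.sum_congr rfl fun m _ => Finset.sum_congr rfl fun k _ => by ring
      rw [e1]
      have e2 : ∀ m, ∑ k, T' m k * Sof u' k j = (1 : Matrix (Fin L) (Fin L) ℝ) m j := fun m => by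
        rw [← Matrix.mul_apply, h2]
      simp [e2, Matrix.one_apply]
    have hST : Sof u * T = 1 := by
      ext i j
      rw [Matrix.mul_apply, Fin.sum_univ_succ]
      refine Fin.cases ?_ (fun i => ?_) i <;> refine Fin.cases ?_ (fun j => ?_) j
      · simp [hT, hS00, hS0s, Matrix.one_apply]
      · have h0 : (1 : Matrix (Fin (L+1)) (Fin (L+1)) ℝ) 0 j.succ = 0 := by
          simp [Matrix.one_apply, (Fin.succ_ne_zero j).symm]
        rw [h0]
        simp only [hT, Fin.cons_zero, Fin.cons_succ, hS00, hS0s]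
        simp only [hcdef]
        ring
      · simp [hT, hSs0, Matrix.one_apply, Fin.succ_ne_zero]
      · have key := congrFun (congrFun h1 i) j
        rw [Matrix.mul_apply] at key
        simp only [hT, Fin.cons_zero, Fin.cons_succ, hSs0, hSss, zero_mul, zero_add]
        rw [key]
        simp [Matrix.one_apply, Fin.succ_inj]
    have hTS : T * Sof u = 1 := by
      ext i j
      rw [Matrix.mul_apply, Fin.sum_univ_succ]
      refine Fin.cases ?_ (fun i => ?_) i <;> refine Fin.cases ?_ (fun j => ?_) j
      · simp [hT, hS00, hSs0, Matrix.one_apply]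
      · have h0 : (1 : Matrix (Fin (L+1)) (Fin (L+1)) ℝ) 0 j.succ = 0 := by
          simp [Matrix.one_apply, (Fin.succ_ne_zero j).symm]
        rw [h0]
        simp only [hT, Fin.cons_zero, Fin.cons_succ, hS00, hS0s, hSss]
        have e3 : ∑ k, -2 * c k * Sof u' k j = -2 * ∑ k, c k * Sof u' k j := by
          rw [Finset.mul_sum]; exact Finset.sum_congr rfl fun k _ => by ring
        rw [e3, hcS]; ring
      · simp [hT, hSs0, hS00, Matrix.one_apply, Fin.succ_ne_zero]
      · have key := congrFun (congrFun h2 i) j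
        rw [Matrix.mul_apply] at key
        simp only [hT, Fin.cons_zero, Fin.cons_succ, hSs0, hSss, zero_mul, zero_add, mul_zero]
        rw [key]
        simp [Matrix.one_apply, Fin.succ_inj]
    have hkey : ∀ b, ∑ k, u 0 k * (Uof u' * T' * (Uof u')ᵀ) k b = ∑ j, c j * u' j b := by
      intro b
      simp only [Matrix.mul_apply, Matrix.transpose_apply, Uof, Finset.mul_sum, Finset.sum_mul]
      rw [Finset.sum_comm]
      refine Finset.sum_congr rfl fun j _ => ?_
      simp only [hcdef, hrdef, Finset.sum_mul, Finset.mul_sum]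
      rw [Finset.sum_comm]
      refine Finset.sum_congr rfl fun i _ => Finset.sum_congr rfl fun k _ => by ring
    have main : Uof u * T * (Uof u)ᵀ
        = Uof u' * T' * (Uof u')ᵀ + (2:ℝ) • Matrix.vecMulVec (u 0) (u 0)
          - (2:ℝ) • (Matrix.vecMulVec (u 0) (u 0) * (Uof u' * T' * (Uof u')ᵀ)) := by
      ext a b
      have hWA : (Matrix.vecMulVec (u 0) (u 0) * (Uof u' * T' * (Uof u')ᵀ)) a b
          = u 0 a * ∑ j, c j * u' j b := by
        rw [Matrix.mul_apply]
        rw [← hkey b, Finset.mul_sum]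
        refine Finset.sum_congr rfl fun k _ => ?_
        rw [Matrix.vecMulVec_apply]; ring
      simp only [Matrix.sub_apply, Matrix.add_apply, Matrix.smul_apply, smul_eq_mul, hWA,
        Matrix.vecMulVec_apply]
      rw [Matrix.mul_apply, Matrix.mul_apply]
      simp only [Matrix.mul_apply]
      simp only [Fin.sum_univ_succ, Matrix.mul_apply, Matrix.transpose_apply, Uof, hT,
        Fin.cons_zero, Fin.cons_succ, mul_zero, Finset.sum_const_zero, add_zero]
      have hsplit : ∀ j : Fin L, (u 0 a * (-2 * c j) + ∑ i, u i.succ a * T' i j) * u j.succ b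
          = (-2) * (u 0 a * (c j * u j.succ b)) + (∑ i, u i.succ a * T' i j) * u j.succ b := by
        intro j; ring
      rw [Finset.sum_congr rfl fun j _ => hsplit j, Finset.sum_add_distrib, ← Finset.mul_sum,
        ← Finset.mul_sum]
      ring
    refine ⟨T, hST, hTS, ?_⟩
    rw [List.ofFn_succ, List.prod_cons]
    have h3' : (List.ofFn fun i : Fin L => (1 : Matrix (Fin N) (Fin N) ℝ)
        - (2:ℝ) • Matrix.vecMulVec (u i.succ) (u i.succ)).prod = 1 - Uof u' * T' * (Uof u')ᵀ := h3
    rw [h3']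
    set A := Uof u' * T' * (Uof u')ᵀ with hA
    set W := Matrix.vecMulVec (u 0) (u 0) with hW
    have expand : ((1 : Matrix (Fin N) (Fin N) ℝ) - (2:ℝ) • W) * (1 - A)
        = 1 - (A + (2:ℝ) • W - (2:ℝ) • (W * A)) := by
      rw [sub_mul, one_mul, mul_sub, mul_one]
      simp only [smul_mul_assoc]
      abel
    rw [expand, main]

/-- The compact WY representation: if `U` has columns `v⁽ˡ⁾/‖v⁽ˡ⁾‖₂` and
`S = ½ I + striu(UᵀU)`, then `S` is invertible and
`H(v⁽¹⁾) ⋯ H(v⁽ᴸ⁾) = I - U S⁻¹ Uᵀ`. -/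
theorem cwy_transform {N L : ℕ} (v : Fin L → Fin N → ℝ) (hv : ∀ l, v l ≠ 0) :
    let U : Matrix (Fin N) (Fin L) ℝ := fun i l => v l i / Real.sqrt (∑ k, v l k ^ 2)
    let S : Matrix (Fin L) (Fin L) ℝ := (1 / 2 : ℝ) • (1 : Matrix (Fin L) (Fin L) ℝ)
      + striu (Uᵀ * U)
    IsUnit S ∧
      (List.ofFn fun l => householder (v l)).prod =
        (1 : Matrix (Fin N) (Fin N) ℝ) - U * S⁻¹ * Uᵀ := by
  intro U S
  have hs : ∀ l, (0:ℝ) < ∑ k, v l k ^ 2 := by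
    intro l
    obtain ⟨k, hk⟩ := Function.ne_iff.mp (hv l)
    exact Finset.sum_pos' (fun k _ => sq_nonneg _)
      ⟨k, Finset.mem_univ k, sq_pos_of_ne_zero hk⟩
  set u : Fin L → Fin N → ℝ := fun l k => v l k / Real.sqrt (∑ k, v l k ^ 2) with hudef
  have hu : ∀ l, ∑ k, u l k ^ 2 = 1 := by
    intro l
    simp only [hudef, div_pow, Real.sq_sqrt (hs l).le]
    rw [← Finset.sum_div, div_self (hs l).ne']
  obtain ⟨T, h1, h2, h3⟩ := cwy_aux u hu
  have hSeq : S = Sof u := rfl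
  have hUeq : U = Uof u := rfl
  have h1' : S * T = 1 := by rw [hSeq]; exact h1
  have h2' : T * S = 1 := by rw [hSeq]; exact h2
  refine ⟨⟨⟨S, T, h1', h2'⟩, rfl⟩, ?_⟩
  have hH : ∀ l, householder (v l) = 1 - (2:ℝ) • Matrix.vecMulVec (u l) (u l) := by
    intro l
    unfold householder
    congr 1
    ext a b
    simp only [Matrix.smul_apply, Matrix.vecMulVec_apply, smul_eq_mul, hudef]
    rw [div_mul_div_comm, Real.mul_self_sqrt (hs l).le]
    ring
  have hfn : (List.ofFn fun l => householder (v l))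
      = List.ofFn fun l => (1 : Matrix (Fin N) (Fin N) ℝ) - (2:ℝ) • Matrix.vecMulVec (u l) (u l) := by
    simp only [hH]
  rw [hfn, h3, hUeq, Matrix.inv_eq_right_inv h1']
end

section
/- Let M < N and let v^(1), …, v^(M) ∈ ℝ^N be nonzero vectors. Let U ∈ ℝ^{N×M} be the matrix whose l-th column is v^(l)/‖v^(l)‖₂, let U₁ be the upper M×M submatrix of U, and let S = (1/2)I + striu(UᵀU). Then S is invertible and the matrix γ(v^(1),…,v^(M)) = [I; 0] − U S⁻¹ U₁ᵀ ∈ ℝ^{N×M} (where [I; 0] denotes the N×M matrix consisting of the M×M identity stacked above an (N−M)×M zero block) satisfies γ(v^(1),…,v^(M))ᵀ γ(v^(1),…,v^(M)) = I, i.e. γ(v^(1),…,v^(M)) belongs to the Stiefel manifold St(N, M). -/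
open scoped BigOperators Matrix

/-- The truncated CWY map lands in the Stiefel manifold: with `U` the matrix of
normalized columns `v⁽ˡ⁾/‖v⁽ˡ⁾‖₂`, `U₁` its upper `M × M` submatrix and
`S = ½ I + striu(UᵀU)`, `S` is invertible and
`γ = [I; 0] - U S⁻¹ U₁ᵀ` satisfies `γᵀ γ = I`. -/
theorem tcwy_mem_stiefel {M N : ℕ} (hMN : M < N) (v : Fin M → Fin N → ℝ)
    (hv : ∀ l, v l ≠ 0) :
    let U : Matrix (Fin N) (Fin M) ℝ := fun i l => v l i / Real.sqrt (∑ k, v l k ^ 2)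
    let U₁ : Matrix (Fin M) (Fin M) ℝ := fun i l => U (Fin.castLE hMN.le i) l
    let S : Matrix (Fin M) (Fin M) ℝ := (1 / 2 : ℝ) • (1 : Matrix (Fin M) (Fin M) ℝ)
      + striu (Uᵀ * U)
    let incl : Matrix (Fin N) (Fin M) ℝ := fun i j => if (i : ℕ) = (j : ℕ) then 1 else 0
    let γ : Matrix (Fin N) (Fin M) ℝ := incl - U * S⁻¹ * U₁ᵀ
    IsUnit S ∧ γᵀ * γ = 1 := by
  intro U U₁ S incl γ
  -- diagonal of UᵀU is 1
  have hdiag : ∀ l, (∑ i, U i l * U i l) = 1 := by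
    intro l
    have hs : 0 < ∑ k, v l k ^ 2 := by
      obtain ⟨k, hk⟩ : ∃ k, v l k ≠ 0 := by
        by_contra h; push_neg at h; exact hv l (funext h)
      refine Finset.sum_pos' (fun i _ => sq_nonneg _) ⟨k, Finset.mem_univ k, by positivity⟩
    have h1 : ∀ i ∈ Finset.univ, U i l * U i l = v l i ^ 2 / (∑ k, v l k ^ 2) := by
      intro i _
      simp only [U]
      rw [div_mul_div_comm, Real.mul_self_sqrt hs.le, sq]
    rw [Finset.sum_congr rfl h1, ← Finset.sum_div, div_self hs.ne']
  have hGsymm : ∀ i j, (Uᵀ * U) i j = (Uᵀ * U) j i := by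
    intro i j
    simp [Matrix.mul_apply, Matrix.transpose_apply, mul_comm]
  -- S is upper triangular with diagonal 1/2
  have hBT : S.BlockTriangular id := by
    intro i j hij
    simp only [id] at hij
    simp [S, striu, Matrix.one_apply, (hij.ne).symm, not_lt.mpr hij.le]
  have hSdiag : ∀ i, S i i = 1 / 2 := by
    intro i; simp [S, striu, Matrix.one_apply]
  have hdet : IsUnit S.det := by
    rw [Matrix.det_of_upperTriangular hBT]
    have : (∏ i, S i i) = (1 / 2 : ℝ) ^ M := by
      rw [Finset.prod_congr rfl (fun i _ => hSdiag i)]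
      simp
    rw [this]
    exact (by positivity : ((1:ℝ)/2) ^ M ≠ 0).isUnit
  have hS : IsUnit S := (Matrix.isUnit_iff_isUnit_det S).mpr hdet
  refine ⟨hS, ?_⟩
  have hST : S * S⁻¹ = 1 := Matrix.mul_nonsing_inv S hdet
  -- S + Sᵀ = UᵀU
  have h3 : S + Sᵀ = Uᵀ * U := by
    ext i j
    have hG : (Uᵀ * U) i i = 1 := by
      rw [show (Uᵀ * U) i i = ∑ k, U k i * U k i by simp [Matrix.mul_apply]]
      exact hdiag i
    rcases lt_trichotomy i j with h | h | h
    · simp [S, striu, Matrix.add_apply, Matrix.transpose_apply, Matrix.one_apply,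
        h, h.ne, h.ne', not_lt.mpr h.le]
    · subst h
      simp [S, striu, Matrix.add_apply, Matrix.transpose_apply, Matrix.one_apply, hG]
      norm_num
    · simp [S, striu, Matrix.add_apply, Matrix.transpose_apply, Matrix.one_apply,
        h, h.ne, h.ne', not_lt.mpr h.le, hGsymm i j]
  have e1 : inclᵀ * incl = (1 : Matrix (Fin M) (Fin M) ℝ) := by
    ext i j
    simp only [Matrix.mul_apply, Matrix.transpose_apply, Matrix.one_apply]
    simp only [incl]
    rw [Finset.sum_eq_single (Fin.castLE hMN.le i)]
    · simp [Fin.ext_iff]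
    · intro b _ hb
      have : (b : ℕ) ≠ (i : ℕ) := fun h => hb (Fin.ext (by simpa using h))
      simp [this]
    · simp
  have e2 : inclᵀ * U = U₁ := by
    ext i l
    simp only [Matrix.mul_apply, Matrix.transpose_apply]
    simp only [incl, U₁]
    rw [Finset.sum_eq_single (Fin.castLE hMN.le i)]
    · simp
    · intro b _ hb
      have : (b : ℕ) ≠ (i : ℕ) := fun h => hb (Fin.ext (by simpa using h))
      simp [this]
    · simp
  have e2' : Uᵀ * incl = U₁ᵀ := by
    have := congrArg Matrix.transpose e2
    rwa [Matrix.transpose_mul, Matrix.transpose_transpose] at this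
  -- middle identity
  have hmid : (S⁻¹)ᵀ * (Uᵀ * U) * S⁻¹ = (S⁻¹)ᵀ + S⁻¹ := by
    rw [← h3, Matrix.mul_add, Matrix.add_mul, Matrix.mul_assoc (S⁻¹)ᵀ S S⁻¹, hST,
      Matrix.mul_one, ← Matrix.transpose_mul, hST, Matrix.transpose_one, Matrix.one_mul]
  -- expand γᵀγ
  have hγ : γᵀ = inclᵀ - U₁ * (S⁻¹)ᵀ * Uᵀ := by
    simp [γ, Matrix.transpose_sub, Matrix.transpose_mul, Matrix.mul_assoc]
  calc γᵀ * γ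
      = inclᵀ * incl - inclᵀ * U * S⁻¹ * U₁ᵀ - U₁ * (S⁻¹)ᵀ * (Uᵀ * incl)
        + U₁ * ((S⁻¹)ᵀ * (Uᵀ * U) * S⁻¹) * U₁ᵀ := by
        rw [hγ]
        simp only [γ, Matrix.sub_mul, Matrix.mul_sub, Matrix.mul_assoc]
        abel
    _ = 1 - U₁ * S⁻¹ * U₁ᵀ - U₁ * (S⁻¹)ᵀ * U₁ᵀ
        + (U₁ * (S⁻¹)ᵀ * U₁ᵀ + U₁ * S⁻¹ * U₁ᵀ) := by
        rw [e1, e2, e2', hmid, Matrix.mul_add, Matrix.add_mul]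
    _ = 1 := by abel
end

section
/- Let B, C ∈ ℝ^{N×D} with D ≤ N be such that A = B Cᵀ is skew-symmetric (A = −Aᵀ), and let Ω ∈ ℝ^{N×M}. Then the D×D matrix I + (1/2) Cᵀ B is invertible, the Cayley transform Cayley(A) = (I + A/2)⁻¹ (I − A/2) is well defined, and Cayley(A) Ω = Ω − B (I + (1/2) Cᵀ B)⁻¹ (Cᵀ Ω). -/
open scoped BigOperators Matrix

/-- For a real skew-symmetric matrix `S`, the matrix `1 + S` is invertible. -/
lemma isUnit_one_add_of_skew {n : ℕ} (S : Matrix (Fin n) (Fin n) ℝ) (h : Sᵀ = -S) :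
    IsUnit (1 + S) := by
  have hpd : ((1 : Matrix (Fin n) (Fin n) ℝ) + Sᵀ * S).PosDef :=
    Matrix.PosDef.add_posSemidef Matrix.PosDef.one
      (by simpa using Matrix.posSemidef_conjTranspose_mul_self S)
  have key : (1 + S) * (1 - S) = 1 + Sᵀ * S := by
    rw [h]; noncomm_ring
  have hdet : IsUnit (1 + S).det := by
    have h2 : (0:ℝ) < ((1 + S) * (1 - S)).det := key ▸ hpd.det_pos
    rw [Matrix.det_mul] at h2
    exact isUnit_iff_ne_zero.mpr (fun hz => by simp [hz] at h2)
  exact (Matrix.isUnit_iff_isUnit_det _).mpr hdet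

/-- `1 + Y * X` is a unit whenever `1 + X * Y` is (square matrices version). -/
lemma isUnit_one_add_swap {n m : ℕ} (X : Matrix (Fin n) (Fin m) ℝ)
    (Y : Matrix (Fin m) (Fin n) ℝ) (h : IsUnit (1 + X * Y)) :
    IsUnit (1 + Y * X) := by
  have hdet : IsUnit (1 + X * Y).det := (Matrix.isUnit_iff_isUnit_det _).mp h
  have hinv : (1 + X * Y) * (1 + X * Y)⁻¹ = 1 := Matrix.mul_nonsing_inv _ hdet
  have key : (1 + Y * X) * (1 - Y * (1 + X * Y)⁻¹ * X) = 1 := by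
    have expand : (1 + Y * X) * (1 - Y * (1 + X * Y)⁻¹ * X)
        = 1 + Y * X - Y * ((1 + X * Y) * (1 + X * Y)⁻¹) * X := by
      simp only [Matrix.mul_add, Matrix.add_mul, Matrix.mul_sub, Matrix.sub_mul,
        Matrix.mul_one, Matrix.one_mul, Matrix.mul_assoc]
    rw [expand, hinv]
    simp
  exact ⟨⟨_, _, key, mul_eq_one_comm.mp key⟩, rfl⟩

/-- The Sherman–Morrison–Woodbury identity for the Cayley transform: if `A = B Cᵀ` is
skew-symmetric, then `I + ½ Cᵀ B` is invertible, `I + ½ A` is invertible (so that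
`Cayley(A) = (I + A/2)⁻¹ (I − A/2)` is well defined) and
`Cayley(A) Ω = Ω − B (I + ½ Cᵀ B)⁻¹ (Cᵀ Ω)`. -/
theorem cayley_woodbury {N D M : ℕ} (hDN : D ≤ N)
    (B C : Matrix (Fin N) (Fin D) ℝ) (hskew : B * Cᵀ = -(B * Cᵀ)ᵀ)
    (Ω : Matrix (Fin N) (Fin M) ℝ) :
    IsUnit ((1 : Matrix (Fin D) (Fin D) ℝ) + (1 / 2 : ℝ) • (Cᵀ * B)) ∧
    IsUnit ((1 : Matrix (Fin N) (Fin N) ℝ) + (1 / 2 : ℝ) • (B * Cᵀ)) ∧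
    ((1 : Matrix (Fin N) (Fin N) ℝ) + (1 / 2 : ℝ) • (B * Cᵀ))⁻¹
        * ((1 : Matrix (Fin N) (Fin N) ℝ) - (1 / 2 : ℝ) • (B * Cᵀ)) * Ω =
      Ω - B * ((1 : Matrix (Fin D) (Fin D) ℝ) + (1 / 2 : ℝ) • (Cᵀ * B))⁻¹ * (Cᵀ * Ω) := by
  set S : Matrix (Fin N) (Fin N) ℝ := (1 / 2 : ℝ) • (B * Cᵀ) with hS
  set T : Matrix (Fin D) (Fin D) ℝ := (1 / 2 : ℝ) • (Cᵀ * B) with hT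
  -- S is skew
  have hSskew : Sᵀ = -S := by
    have h2 := congrArg Matrix.transpose hskew
    rw [Matrix.transpose_neg, Matrix.transpose_transpose] at h2
    rw [hS, Matrix.transpose_smul, h2, smul_neg]
  -- key smul rewrites
  have hXY : B * ((1 / 2 : ℝ) • Cᵀ) = S := by rw [hS, Matrix.mul_smul]
  have hYX : ((1 / 2 : ℝ) • Cᵀ) * B = T := by rw [hT, Matrix.smul_mul]
  -- invertibility of 1 + S
  have hNunit : IsUnit (1 + S) := isUnit_one_add_of_skew S hSskew
  -- invertibility of 1 + T
  have hDunit : IsUnit (1 + T) := by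
    have := isUnit_one_add_swap B ((1 / 2 : ℝ) • Cᵀ) (by rwa [hXY])
    rwa [hYX] at this
  refine ⟨hDunit, hNunit, ?_⟩
  have hNdet : IsUnit (1 + S).det := (Matrix.isUnit_iff_isUnit_det _).mp hNunit
  have hDdet : IsUnit (1 + T).det := (Matrix.isUnit_iff_isUnit_det _).mp hDunit
  have hDinv : (1 + T) * (1 + T)⁻¹ = 1 := Matrix.mul_nonsing_inv _ hDdet
  -- Woodbury: (1 + S)⁻¹ = 1 - B (1+T)⁻¹ (½ Cᵀ)
  have hwood : (1 + S)⁻¹ = 1 - B * (1 + T)⁻¹ * ((1 / 2 : ℝ) • Cᵀ) := by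
    apply Matrix.inv_eq_right_inv
    have expand : (1 + S) * (1 - B * (1 + T)⁻¹ * ((1 / 2 : ℝ) • Cᵀ))
        = 1 + B * ((1 / 2 : ℝ) • Cᵀ)
          - B * (((1 : Matrix (Fin D) (Fin D) ℝ)
              + ((1 / 2 : ℝ) • Cᵀ) * B) * (1 + T)⁻¹) * ((1 / 2 : ℝ) • Cᵀ) := by
      rw [← hXY]
      simp only [Matrix.mul_add, Matrix.add_mul, Matrix.mul_sub, Matrix.sub_mul,
        Matrix.mul_one, Matrix.one_mul, Matrix.mul_smul, Matrix.smul_mul,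
        Matrix.mul_assoc, smul_add, smul_sub, smul_smul]
    rw [expand, hYX, hDinv]
    simp
  -- now compute
  have h1S : (1 : Matrix (Fin N) (Fin N) ℝ) - S = 2 • (1 : Matrix (Fin N) (Fin N) ℝ) - (1 + S) := by
    noncomm_ring
  have hmulinv : (1 + S)⁻¹ * (1 + S) = 1 := Matrix.nonsing_inv_mul _ hNdet
  calc (1 + S)⁻¹ * (1 - S) * Ω
      = (2 • (1 + S)⁻¹ - (1 + S)⁻¹ * (1 + S)) * Ω := by
        rw [h1S]; noncomm_ring
    _ = (2 • (1 + S)⁻¹ - 1) * Ω := by rw [hmulinv]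
    _ = (1 - B * (1 + T)⁻¹ * Cᵀ) * Ω := by
        rw [hwood]
        congr 1
        have : (2 : ℕ) • (B * (1 + T)⁻¹ * ((1 / 2 : ℝ) • Cᵀ)) = B * (1 + T)⁻¹ * Cᵀ := by
          rw [Matrix.mul_smul, ← Nat.cast_smul_eq_nsmul ℝ, smul_smul]
          norm_num
        rw [smul_sub, ← this]
        noncomm_ring
    _ = Ω - B * (1 + T)⁻¹ * (Cᵀ * Ω) := by
        rw [Matrix.sub_mul, Matrix.one_mul, Matrix.mul_assoc]
end

section
/- Let s′, s″ ∈ ℝ^N be unit vectors (‖s′‖₂ = ‖s″‖₂ = 1). Then the sum over all triples of indices 1 ≤ i, j₁, j₂ ≤ N of ( 4 s′_{j₁} s′_{j₂} s′_i − 4 s″_{j₁} s″_{j₂} s″_i − 2 (s′_{j₁} − s″_{j₁}) δ_{j₂,i} − 2 (s′_{j₂} − s″_{j₂}) δ_{j₁,i} )² is at most 8 (N + 60) ‖s′ − s″‖₂², where δ_{a,b} is the Kronecker delta. (This quantity equals ‖∇_{s′} H(s′) − ∇_{s″} H(s″)‖_F², the squared Frobenius distance between the derivative tensors of the Householder reflection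 at s′ and s″.) -/
open scoped BigOperators

/-- For unit vectors `s′, s″ ∈ ℝᴺ`, the squared Frobenius distance between the derivative
tensors of the Householder reflection at `s′` and `s″` is at most `8 (N + 60) ‖s′ − s″‖₂²`. -/
theorem householder_derivative_tensor_diff_bound {N : ℕ} (s' s'' : Fin N → ℝ)
    (hs' : ∑ k, s' k ^ 2 = 1) (hs'' : ∑ k, s'' k ^ 2 = 1) :
    ∑ i, ∑ j₁, ∑ j₂,
        (4 * s' j₁ * s' j₂ * s' i - 4 * s'' j₁ * s'' j₂ * s'' i
          - 2 * (s' j₁ - s'' j₁) * (if j₂ = i then (1 : ℝ) else 0)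
          - 2 * (s' j₂ - s'' j₂) * (if j₁ = i then (1 : ℝ) else 0)) ^ 2
      ≤ 8 * ((N : ℝ) + 60) * ∑ i, (s' i - s'' i) ^ 2 := by
  have sum3 : ∀ f g h : Fin N → ℝ,
      ∑ i, ∑ j1, ∑ j2, f j1 * g j2 * h i = (∑ k, f k) * (∑ k, g k) * (∑ k, h k) := by
    intro f g h
    simp_rw [← Finset.sum_mul, ← Finset.mul_sum, Finset.sum_mul]
  have sum2 : ∀ f g : Fin N → ℝ,
      ∑ i, ∑ j, f j * g i = (∑ k, f k) * (∑ k, g k) := by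
    intro f g
    simp_rw [← Finset.sum_mul, ← Finset.mul_sum]
  set C : ℝ := ∑ k, s' k * s'' k with hC
  set D : ℝ := ∑ i, (s' i - s'' i) ^ 2 with hD
  have hDC : D = 2 - 2 * C := by
    have : ∀ i : Fin N, (s' i - s'' i) ^ 2 = s' i ^ 2 + s'' i ^ 2 - 2 * (s' i * s'' i) := by
      intro i; ring
    simp_rw [hD, this, Finset.sum_sub_distrib, Finset.sum_add_distrib, hs', hs'',
      ← Finset.mul_sum, ← hC]
    ring
  have hCle : C ≤ 1 := by
    have hDnn : 0 ≤ D := Finset.sum_nonneg fun i _ => sq_nonneg _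
    linarith [hDC ▸ hDnn]
  have hCge : -1 ≤ C := by
    have h0 : (0:ℝ) ≤ ∑ i, (s' i + s'' i) ^ 2 := Finset.sum_nonneg fun i _ => sq_nonneg _
    have : ∑ i, (s' i + s'' i) ^ 2 = 2 + 2 * C := by
      have : ∀ i : Fin N, (s' i + s'' i) ^ 2 = s' i ^ 2 + s'' i ^ 2 + 2 * (s' i * s'' i) := by
        intro i; ring
      simp_rw [this, Finset.sum_add_distrib, hs', hs'', ← Finset.mul_sum, ← hC]
      ring
    linarith [this ▸ h0]
  -- pointwise expansion
  have hpt : ∀ i j1 j2 : Fin N,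
      (4 * s' j1 * s' j2 * s' i - 4 * s'' j1 * s'' j2 * s'' i
          - 2 * (s' j1 - s'' j1) * (if j2 = i then (1 : ℝ) else 0)
          - 2 * (s' j2 - s'' j2) * (if j1 = i then (1 : ℝ) else 0)) ^ 2
      = (4 * s' j1 * s' j2 * s' i - 4 * s'' j1 * s'' j2 * s'' i) ^ 2
        + (if j2 = i then 4 * (s' j1 - s'' j1) ^ 2
            - 4 * (4 * s' j1 * s' j2 * s' i - 4 * s'' j1 * s'' j2 * s'' i) * (s' j1 - s'' j1)
            else 0)
        + (if j1 = i then 4 * (s' j2 - s'' j2) ^ 2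
            - 4 * (4 * s' j1 * s' j2 * s' i - 4 * s'' j1 * s'' j2 * s'' i) * (s' j2 - s'' j2)
            else 0)
        + (if j2 = i then (if j1 = i then
            8 * (s' j1 - s'' j1) * (s' j2 - s'' j2) else 0) else 0) := by
    intro i j1 j2
    split_ifs <;> ring
  simp_rw [hpt, Finset.sum_add_distrib, Finset.sum_ite_irrel, Finset.sum_const_zero,
    Finset.sum_ite_eq', Finset.mem_univ, if_true]
  simp_rw [Finset.sum_ite_eq', Finset.mem_univ, if_true]
  have hA : ∑ k, s' k * (s' k - s'' k) = 1 - C := by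
    have h : ∀ k : Fin N, s' k * (s' k - s'' k) = s' k ^ 2 - s' k * s'' k := fun k => by ring
    simp_rw [h, Finset.sum_sub_distrib, hs']
    rfl
  have hB : ∑ k, s'' k * (s' k - s'' k) = C - 1 := by
    have h : ∀ k : Fin N, s'' k * (s' k - s'' k) = s' k * s'' k - s'' k ^ 2 := fun k => by ring
    simp_rw [h, Finset.sum_sub_distrib, hs'']
    rfl
  have S1 : ∑ x : Fin N, ∑ x1 : Fin N, ∑ x2 : Fin N,
      (4 * s' x1 * s' x2 * s' x - 4 * s'' x1 * s'' x2 * s'' x) ^ 2 = 32 - 32 * C ^ 3 := by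
    have key : ∀ x x1 x2 : Fin N,
        (4 * s' x1 * s' x2 * s' x - 4 * s'' x1 * s'' x2 * s'' x) ^ 2
        = 16 * (s' x1 ^ 2 * s' x2 ^ 2 * s' x ^ 2)
          + 16 * (s'' x1 ^ 2 * s'' x2 ^ 2 * s'' x ^ 2)
          - 32 * ((s' x1 * s'' x1) * (s' x2 * s'' x2) * (s' x * s'' x)) :=
      fun x x1 x2 => by ring
    simp_rw [key, Finset.sum_sub_distrib, Finset.sum_add_distrib, ← Finset.mul_sum, sum3,
      hs', hs'', ← hC]
    ring
  have S2 : ∑ x : Fin N, ∑ x1 : Fin N,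
      (4 * (s' x1 - s'' x1) ^ 2
        - 4 * (4 * s' x1 * s' x * s' x - 4 * s'' x1 * s'' x * s'' x) * (s' x1 - s'' x1))
      = (N : ℝ) * (4 * D) - 16 * D := by
    have key : ∀ x x1 : Fin N,
        (4 * (s' x1 - s'' x1) ^ 2
          - 4 * (4 * s' x1 * s' x * s' x - 4 * s'' x1 * s'' x * s'' x) * (s' x1 - s'' x1))
        = 4 * (s' x1 - s'' x1) ^ 2
          - 16 * ((s' x1 * (s' x1 - s'' x1)) * (s' x ^ 2))
          + 16 * ((s'' x1 * (s' x1 - s'' x1)) * (s'' x ^ 2)) :=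
      fun x x1 => by ring
    simp_rw [key, Finset.sum_add_distrib, Finset.sum_sub_distrib, ← Finset.mul_sum, sum2,
      hs', hs'', hA, hB, ← hD, Finset.sum_const, Finset.card_univ, Fintype.card_fin,
      nsmul_eq_mul]
    rw [hDC]; ring
  have S3 : ∑ x : Fin N, ∑ x1 : Fin N,
      (4 * (s' x1 - s'' x1) ^ 2
        - 4 * (4 * s' x * s' x1 * s' x - 4 * s'' x * s'' x1 * s'' x) * (s' x1 - s'' x1))
      = (N : ℝ) * (4 * D) - 16 * D := by
    have key : ∀ x x1 : Fin N,
        (4 * (s' x1 - s'' x1) ^ 2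
          - 4 * (4 * s' x * s' x1 * s' x - 4 * s'' x * s'' x1 * s'' x) * (s' x1 - s'' x1))
        = 4 * (s' x1 - s'' x1) ^ 2
          - 16 * ((s' x1 * (s' x1 - s'' x1)) * (s' x ^ 2))
          + 16 * ((s'' x1 * (s' x1 - s'' x1)) * (s'' x ^ 2)) :=
      fun x x1 => by ring
    simp_rw [key, Finset.sum_add_distrib, Finset.sum_sub_distrib, ← Finset.mul_sum, sum2,
      hs', hs'', hA, hB, ← hD, Finset.sum_const, Finset.card_univ, Fintype.card_fin,
      nsmul_eq_mul]
    rw [hDC]; ring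
  have S4 : ∑ x : Fin N, 8 * (s' x - s'' x) * (s' x - s'' x) = 8 * D := by
    have key : ∀ x : Fin N, 8 * (s' x - s'' x) * (s' x - s'' x) = 8 * (s' x - s'' x) ^ 2 :=
      fun x => by ring
    simp_rw [key, ← Finset.mul_sum]
    rfl
    -- may already close
  rw [S1, S2, S3, S4, hDC]
  have h2 : (0:ℝ) ≤ C + 2 := by linarith
  have hkey : 32 - 32 * C ^ 3 ≤ 96 * (1 - C) := by
    nlinarith [mul_nonneg (sq_nonneg (1 - C)) h2]
  nlinarith [hkey, hCle, mul_nonneg (Nat.cast_nonneg N : (0:ℝ) ≤ N)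
    (show (0:ℝ) ≤ 2 - 2 * C by linarith)]
end

section
/- Let A > 0, let f : ℝ^{N×N} → ℝ be differentiable, and let v^(1), …, v^(L) ∈ ℝ^N satisfy ‖v^(l)‖₂ ≥ A for all l. Define F(v^(1), …, v^(L)) = f( H(v^(1)) ⋯ H(v^(L)) ). Then for every l ∈ {1, …, L}, ‖ ∇_{v^(l)} F ‖₂² ≤ (24/A²) N (N + 2) ‖ ∇f( H(v^(1)) ⋯ H(v^(L)) ) ‖_F², and summing over l, Σ_{l=1}^{L} ‖ ∇_{v^(l)} F ‖₂² ≤ (24/A²) N (N + 2) L ‖ ∇f( H(v^(1)) ⋯ H(v^(L)) ) ‖_F². -/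
open scoped BigOperators Matrix

attribute [local instance] Matrix.frobeniusSeminormedAddCommGroup
  Matrix.frobeniusNormedAddCommGroup Matrix.frobeniusNormedSpace

/-- The ordered product of Householder reflections `H(v⁽¹⁾) ⋯ H(v⁽ᴸ⁾)`. -/
noncomputable def prodHouseholder {N L : ℕ} (vs : Fin L → Fin N → ℝ) :
    Matrix (Fin N) (Fin N) ℝ :=
  (List.ofFn fun l => householder (vs l)).prod

/-- The matrix of partial derivatives `∇f(X)` of `f : ℝ^{N×N} → ℝ` at `X`. -/
noncomputable def matGrad {N : ℕ} (f : Matrix (Fin N) (Fin N) ℝ → ℝ)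
    (X : Matrix (Fin N) (Fin N) ℝ) : Matrix (Fin N) (Fin N) ℝ :=
  fun i j => fderiv ℝ f X (Matrix.single i j 1)

/-- The gradient in `ℝᴺ` of `(v⁽¹⁾, …, v⁽ᴸ⁾) ↦ f(H(v⁽¹⁾) ⋯ H(v⁽ᴸ⁾))` with respect to the
`l`-th argument `v⁽ˡ⁾`. -/
noncomputable def partialGradH {N L : ℕ} (f : Matrix (Fin N) (Fin N) ℝ → ℝ)
    (vs : Fin L → Fin N → ℝ) (l : Fin L) : Fin N → ℝ :=
  fun i => fderiv ℝ (fun w : Fin N → ℝ => f (prodHouseholder (Function.update vs l w)))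
    (vs l) (Pi.single i 1)

namespace PGB
variable {N : ℕ}

noncomputable def vmvB (N : ℕ) : (Fin N → ℝ) →L[ℝ] (@ContinuousLinearMap ℝ ℝ _ _ (RingHom.id ℝ) (Fin N → ℝ) _ _ (Matrix (Fin N) (Fin N) ℝ) (@UniformSpace.toTopologicalSpace _ PseudoMetricSpace.toUniformSpace) _ _ _) :=
  LinearMap.toContinuousLinearMap
  { toFun := fun x => LinearMap.toContinuousLinearMap
      { toFun := fun y => Matrix.vecMulVec x y
        map_add' := by
          intro y z; ext i j
          simp [Matrix.vecMulVec_apply, Matrix.add_apply, mul_add]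
        map_smul' := by
          intro c y; ext i j
          simp [Matrix.vecMulVec_apply, Matrix.smul_apply]; ring }
    map_add' := by
      intro x x'; apply ContinuousLinearMap.ext; intro y; ext i j
      simp [Matrix.vecMulVec_apply, Matrix.add_apply, add_mul]
    map_smul' := by
      intro c x; apply ContinuousLinearMap.ext; intro y; ext i j
      simp [Matrix.vecMulVec_apply, Matrix.smul_apply] }

@[simp] lemma vmvB_apply (x y : Fin N → ℝ) : vmvB N x y = Matrix.vecMulVec x y := rfl

lemma householder_hasFDerivAt (v : Fin N → ℝ) (hQ : (∑ k, v k ^ 2) ≠ 0) :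
    ∃ D : @ContinuousLinearMap ℝ ℝ _ _ (RingHom.id ℝ) (Fin N → ℝ) _ _ (Matrix (Fin N) (Fin N) ℝ) (@UniformSpace.toTopologicalSpace _ PseudoMetricSpace.toUniformSpace) _ _ _,
      HasFDerivAt householder D v ∧ ∀ u a b,
        D u a b = 4 * (∑ k, v k * u k) / (∑ k, v k ^ 2) ^ 2 * (v a * v b)
          - 2 / (∑ k, v k ^ 2) * (u a * v b + v a * u b) := by
  have hQd : HasFDerivAt (fun w : Fin N → ℝ => ∑ k, w k ^ 2)
      (∑ k, (v k • ContinuousLinearMap.proj (R := ℝ) (φ := fun _ : Fin N => ℝ) k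
        + v k • ContinuousLinearMap.proj (R := ℝ) (φ := fun _ : Fin N => ℝ) k)) v := by
    have : ∀ k : Fin N, HasFDerivAt (fun w : Fin N → ℝ => w k * w k)
        (v k • ContinuousLinearMap.proj (R := ℝ) (φ := fun _ : Fin N => ℝ) k
          + v k • ContinuousLinearMap.proj (R := ℝ) (φ := fun _ : Fin N => ℝ) k) v := by
      intro k
      exact (ContinuousLinearMap.proj (R := ℝ) (φ := fun _ : Fin N => ℝ) k).hasFDerivAt.mul
        (ContinuousLinearMap.proj (R := ℝ) (φ := fun _ : Fin N => ℝ) k).hasFDerivAt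
    have h2 := HasFDerivAt.fun_sum (fun k (_ : k ∈ Finset.univ) => this k)
    simpa [sq] using h2
  have hinv := (hasFDerivAt_inv' (𝕜 := ℝ) (R := ℝ) hQ).comp v hQd
  have hc := hinv.const_mul (2 : ℝ)
  have hβ := (vmvB N).hasFDerivAt_of_bilinear (hasFDerivAt_id v) (hasFDerivAt_id v)
  have hs := hc.smul hβ
  have hH := hs.const_sub (1 : Matrix (Fin N) (Fin N) ℝ)
  have heq : householder (N := N) = fun w =>
      (1 : Matrix (Fin N) (Fin N) ℝ) - (2 * (∑ k, w k ^ 2)⁻¹) • ((vmvB N) (id w)) (id w) := by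
    funext w; simp [householder, div_eq_mul_inv]
  refine ⟨_, by rw [heq]; exact hH, ?_⟩
  intro u a b
  simp [ContinuousLinearMap.smul_apply, ContinuousLinearMap.sub_apply,
    ContinuousLinearMap.add_apply, ContinuousLinearMap.smulRight_apply,
    ContinuousLinearMap.comp_apply, ContinuousLinearMap.mulLeftRight_apply,
    ContinuousLinearMap.sum_apply, ContinuousLinearMap.proj_apply,
    Matrix.sub_apply, Matrix.add_apply, Matrix.smul_apply, Matrix.zero_apply,
    Matrix.vecMulVec_apply, Finset.sum_add_distrib, smul_eq_mul, vmvB_apply]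
  have hsum : (∑ x, (∑ k, v k ^ 2)⁻¹ * (v x * u x) * (∑ k, v k ^ 2)⁻¹)
      = (∑ x, v x * u x) * ((∑ k, v k ^ 2)⁻¹ * (∑ k, v k ^ 2)⁻¹) := by
    rw [Finset.sum_mul]
    exact Finset.sum_congr rfl fun x _ => by ring
  rw [hsum]
  field_simp
  ring

lemma householder_transpose (v : Fin N → ℝ) :
    (householder v)ᵀ = householder v := by
  unfold householder
  rw [Matrix.transpose_sub, Matrix.transpose_smul, Matrix.transpose_one]
  congr 1
  ext a b
  simp [Matrix.vecMulVec_apply, mul_comm]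

lemma vecMulVec_mul_self (v : Fin N → ℝ) :
    Matrix.vecMulVec v v * Matrix.vecMulVec v v = (∑ k, v k ^ 2) • Matrix.vecMulVec v v := by
  ext a b
  simp only [Matrix.mul_apply, Matrix.vecMulVec_apply, Matrix.smul_apply, smul_eq_mul]
  rw [Finset.sum_mul]
  exact Finset.sum_congr rfl fun k _ => by ring

lemma householder_mul_self (v : Fin N → ℝ) (hQ : (∑ k, v k ^ 2) ≠ 0) :
    householder v * householder v = 1 := by
  have key : ((2 / ∑ k, v k ^ 2) • Matrix.vecMulVec v v) * ((2 / ∑ k, v k ^ 2) • Matrix.vecMulVec v v)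
      = (2 / ∑ k, v k ^ 2) • Matrix.vecMulVec v v + (2 / ∑ k, v k ^ 2) • Matrix.vecMulVec v v := by
    rw [Matrix.smul_mul, Matrix.mul_smul, vecMulVec_mul_self, smul_smul, smul_smul, ← add_smul]
    congr 1
    field_simp
    ring
  unfold householder
  rw [sub_mul, mul_sub, mul_sub, key]
  simp only [one_mul, mul_one]
  abel

lemma prod_orth (lst : List (Matrix (Fin N) (Fin N) ℝ))
    (h : ∀ M ∈ lst, Mᵀ * M = 1) : lst.prodᵀ * lst.prod = 1 := by
  induction lst with
  | nil => simp
  | cons M t ih =>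
    have hM := h M (List.mem_cons_self)
    have ht := ih fun X hX => h X (List.mem_cons_of_mem M hX)
    simp only [List.prod_cons, Matrix.transpose_mul]
    calc t.prodᵀ * Mᵀ * (M * t.prod) = t.prodᵀ * (Mᵀ * M) * t.prod := by
          rw [Matrix.mul_assoc, Matrix.mul_assoc, Matrix.mul_assoc]
      _ = 1 := by rw [hM, Matrix.mul_one, ht]

lemma ofFn_update {L : ℕ} (vs : Fin L → Fin N → ℝ) (l : Fin L) (w : Fin N → ℝ) :
    (List.ofFn fun j => householder (Function.update vs l w j))
      = (List.ofFn fun j => householder (vs j)).set l (householder w) := by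
  apply List.ext_getElem
  · simp
  · intro n h1 h2
    have hn : n < L := by simpa using h1
    simp only [List.getElem_set, List.getElem_ofFn, Function.update_apply]
    have hiff : ((l : ℕ) = n) = ((⟨n, hn⟩ : Fin L) = l) := by
      simp [Fin.ext_iff, eq_comm]
    by_cases h : (⟨n, hn⟩ : Fin L) = l
    · simp [hiff, h]
    · simp [hiff, h]

lemma prodHouseholder_decomp {L : ℕ} (vs : Fin L → Fin N → ℝ) (l : Fin L) (w : Fin N → ℝ) :
    prodHouseholder (Function.update vs l w)
      = ((List.ofFn fun j => householder (vs j)).take l).prod * householder w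
        * ((List.ofFn fun j => householder (vs j)).drop (l + 1)).prod := by
  unfold prodHouseholder
  rw [ofFn_update, List.prod_set]
  have : (l : ℕ) < (List.ofFn fun j => householder (vs j)).length := by simp [l.isLt]
  rw [if_pos this]

lemma sum_sq_eq_trace (X : Matrix (Fin N) (Fin N) ℝ) :
    ∑ a, ∑ b, (X a b) ^ 2 = Matrix.trace (Xᵀ * X) := by
  simp only [Matrix.trace, Matrix.diag_apply, Matrix.mul_apply, Matrix.transpose_apply, sq]
  rw [Finset.sum_comm]

lemma sum_sq_conj (P₁ P₂ M : Matrix (Fin N) (Fin N) ℝ)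
    (h1 : P₁ᵀ * P₁ = 1) (h2 : P₂ * P₂ᵀ = 1) :
    ∑ a, ∑ b, ((P₁ * M * P₂) a b) ^ 2 = ∑ a, ∑ b, (M a b) ^ 2 := by
  rw [sum_sq_eq_trace, sum_sq_eq_trace]
  have : (P₁ * M * P₂)ᵀ * (P₁ * M * P₂) = P₂ᵀ * (Mᵀ * M) * P₂ := by
    rw [Matrix.transpose_mul, Matrix.transpose_mul]
    calc P₂ᵀ * (Mᵀ * P₁ᵀ) * (P₁ * M * P₂)
        = P₂ᵀ * Mᵀ * (P₁ᵀ * P₁) * (M * P₂) := by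
          simp only [Matrix.mul_assoc]
      _ = P₂ᵀ * (Mᵀ * M) * P₂ := by rw [h1]; simp only [Matrix.mul_assoc, Matrix.one_mul]
  rw [this, Matrix.trace_mul_comm, ← Matrix.mul_assoc, h2, Matrix.one_mul]

lemma clm_expand (T : Matrix (Fin N) (Fin N) ℝ →L[ℝ] ℝ) (M : Matrix (Fin N) (Fin N) ℝ) :
    T M = ∑ a, ∑ b, M a b * T (Matrix.single a b 1) := by
  conv_lhs => rw [Matrix.matrix_eq_sum_single M]
  rw [map_sum]
  refine Finset.sum_congr rfl fun a _ => ?_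
  rw [map_sum]
  refine Finset.sum_congr rfl fun b _ => ?_
  have : Matrix.single a b (M a b) = (M a b) • Matrix.single a b 1 := by
    rw [Matrix.smul_single, smul_eq_mul, mul_one]
  rw [this, map_smul, smul_eq_mul]

lemma cs_double (G M : Matrix (Fin N) (Fin N) ℝ) :
    (∑ a, ∑ b, G a b * M a b) ^ 2 ≤ (∑ a, ∑ b, (G a b) ^ 2) * (∑ a, ∑ b, (M a b) ^ 2) := by
  have h := Finset.sum_mul_sq_le_sq_mul_sq Finset.univ
    (fun p : Fin N × Fin N => G p.1 p.2) (fun p : Fin N × Fin N => M p.1 p.2)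
  simpa [Fintype.sum_prod_type] using h

lemma sum_factor3 (φ ψ χ : Fin N → ℝ) :
    ∑ i, ∑ a, ∑ b, φ i * (ψ a * χ b) = (∑ i, φ i) * ((∑ a, ψ a) * (∑ b, χ b)) := by
  rw [Finset.sum_mul]
  refine Finset.sum_congr rfl fun i _ => ?_
  rw [Finset.sum_mul_sum, Finset.mul_sum]
  refine Finset.sum_congr rfl fun a _ => ?_
  rw [Finset.mul_sum]

lemma sum_factor_right (ψ : Fin N → Fin N → ℝ) (χ : Fin N → ℝ) :
    ∑ i, ∑ a, ∑ b, ψ i a * χ b = (∑ i, ∑ a, ψ i a) * ∑ b, χ b := by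
  rw [Finset.sum_mul]
  refine Finset.sum_congr rfl fun i _ => ?_
  rw [Finset.sum_mul]
  refine Finset.sum_congr rfl fun a _ => ?_
  rw [← Finset.mul_sum]

lemma sum_factor_mid (ψ : Fin N → Fin N → ℝ) (χ : Fin N → ℝ) :
    ∑ i, ∑ a, ∑ b, χ a * ψ i b = (∑ i, ∑ b, ψ i b) * ∑ a, χ a := by
  rw [Finset.sum_mul]
  refine Finset.sum_congr rfl fun i _ => ?_
  rw [Finset.sum_comm, Finset.sum_mul]
  refine Finset.sum_congr rfl fun b _ => ?_
  rw [Finset.mul_sum]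
  refine Finset.sum_congr rfl fun a _ => ?_
  ring

lemma Dsum_bound (v : Fin N → ℝ) (u : Fin N → Fin N → ℝ)
    (hu : ∀ i, ∑ a, (u i a) ^ 2 = 1)
    (A : ℝ) (hA : 0 < A) (hQA : A ^ 2 ≤ ∑ k, v k ^ 2) :
    ∑ i, ∑ a, ∑ b, (4 * v i / (∑ k, v k ^ 2) ^ 2 * (v a * v b)
       - 2 / (∑ k, v k ^ 2) * ((u i a) * v b + v a * u i b)) ^ 2
     ≤ (48 + 24 * N) / A ^ 2 := by
  set Q := ∑ k, v k ^ 2 with hQdef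
  have hQ0 : 0 < Q := lt_of_lt_of_le (by positivity) hQA
  have point : ∀ (i a b : Fin N),
      (4 * v i / Q ^ 2 * (v a * v b)
        - 2 / Q * ((u i a) * v b + v a * u i b)) ^ 2
      ≤ 3 * ((48 / (48:ℝ)) * (4 * v i / Q ^ 2 * (v a * v b)) ^ 2)
        + (3 * (2 / Q * ((u i a) * v b)) ^ 2
          + 3 * (2 / Q * (v a * u i b)) ^ 2) := by
    intro i a b
    set x := 4 * v i / Q ^ 2 * (v a * v b)
    set y := 2 / Q * ((u i a) * v b)
    set z := 2 / Q * (v a * u i b)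
    have h1 : 2 / Q * ((u i a) * v b + v a * u i b) = y + z := by
      rw [mul_add]
    rw [h1]
    have : (x - (y + z)) ^ 2 ≤ 3 * x ^ 2 + (3 * y ^ 2 + 3 * z ^ 2) := by
      nlinarith [sq_nonneg (x + y), sq_nonneg (x + z), sq_nonneg (y - z)]
    simpa using this
  calc ∑ i, ∑ a, ∑ b, (4 * v i / Q ^ 2 * (v a * v b)
        - 2 / Q * ((u i a) * v b + v a * u i b)) ^ 2
      ≤ ∑ i, ∑ a, ∑ b, (3 * ((48 / (48:ℝ)) * (4 * v i / Q ^ 2 * (v a * v b)) ^ 2)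
        + (3 * (2 / Q * ((u i a) * v b)) ^ 2
          + 3 * (2 / Q * (v a * u i b)) ^ 2)) := by
        refine Finset.sum_le_sum fun i _ => Finset.sum_le_sum fun a _ =>
          Finset.sum_le_sum fun b _ => point i a b
    _ = (∑ i, ∑ a, ∑ b, (48 / Q ^ 4 * v i ^ 2) * (v a ^ 2 * v b ^ 2))
        + ((∑ i, ∑ a, ∑ b, (12 / Q ^ 2 * (u i a) ^ 2) * (v b ^ 2))
          + (∑ i, ∑ a, ∑ b, (v a ^ 2) * (12 / Q ^ 2 * (u i b) ^ 2))) := by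
        rw [← Finset.sum_add_distrib, ← Finset.sum_add_distrib]
        refine Finset.sum_congr rfl fun i _ => ?_
        rw [← Finset.sum_add_distrib, ← Finset.sum_add_distrib]
        refine Finset.sum_congr rfl fun a _ => ?_
        rw [← Finset.sum_add_distrib, ← Finset.sum_add_distrib]
        refine Finset.sum_congr rfl fun b _ => ?_
        ring
    _ = (48 / Q ^ 4 * Q) * (Q * Q) + ((12 / Q ^ 2 * N) * Q + (12 / Q ^ 2 * N) * Q) := by
        rw [sum_factor3 (fun i => 48 / Q ^ 4 * v i ^ 2) (fun a => v a ^ 2) (fun b => v b ^ 2)]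
        rw [sum_factor_right (fun i a => 12 / Q ^ 2 * (u i a) ^ 2) (fun b => v b ^ 2)]
        rw [sum_factor_mid (fun i b => 12 / Q ^ 2 * (u i b) ^ 2) (fun a => v a ^ 2)]
        have h1 : ∑ i, 48 / Q ^ 4 * v i ^ 2 = 48 / Q ^ 4 * Q := by
          rw [← Finset.mul_sum]
        have h2 : ∑ i : Fin N, ∑ a : Fin N, 12 / Q ^ 2 * (u i a) ^ 2
            = 12 / Q ^ 2 * N := by
          have : ∀ i : Fin N, ∑ a : Fin N, 12 / Q ^ 2 * (u i a) ^ 2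
              = 12 / Q ^ 2 * ∑ a : Fin N, (u i a) ^ 2 := fun i => by
            rw [Finset.mul_sum]
          rw [Finset.sum_congr rfl fun i _ => this i, ← Finset.mul_sum]
          simp [hu]
        rw [h1, h2]
    _ = (48 + 24 * N) / Q := by field_simp; ring
    _ ≤ (48 + 24 * N) / A ^ 2 := by
        apply div_le_div_of_nonneg_left _ (by positivity) hQA
        positivity

end PGB

/-- If `‖v⁽ˡ⁾‖₂ ≥ A > 0` for all `l`, then for `F(v⁽¹⁾, …, v⁽ᴸ⁾) = f(H(v⁽¹⁾) ⋯ H(v⁽ᴸ⁾))`,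
each `‖∇_{v⁽ˡ⁾} F‖₂² ≤ (24/A²) N (N+2) ‖∇f(H(v⁽¹⁾) ⋯ H(v⁽ᴸ⁾))‖_F²`, and summing over `l`
gives `∑_l ‖∇_{v⁽ˡ⁾} F‖₂² ≤ (24/A²) N (N+2) L ‖∇f(H(v⁽¹⁾) ⋯ H(v⁽ᴸ⁾))‖_F²`. -/
theorem partial_gradient_bound {N L : ℕ} (A : ℝ) (hA : 0 < A)
    (f : Matrix (Fin N) (Fin N) ℝ → ℝ) (hf : Differentiable ℝ f)
    (vs : Fin L → Fin N → ℝ) (hvs : ∀ l, A ≤ Real.sqrt (∑ k, vs l k ^ 2)) :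
    (∀ l : Fin L, ∑ i, partialGradH f vs l i ^ 2
        ≤ 24 / A ^ 2 * N * ((N : ℝ) + 2)
            * ∑ i, ∑ j, matGrad f (prodHouseholder vs) i j ^ 2) ∧
    ∑ l, ∑ i, partialGradH f vs l i ^ 2
        ≤ 24 / A ^ 2 * N * ((N : ℝ) + 2) * L
            * ∑ i, ∑ j, matGrad f (prodHouseholder vs) i j ^ 2 := by
  have hQpos : ∀ j : Fin L, 0 < ∑ k, vs j k ^ 2 := by
    intro j
    have := lt_of_lt_of_le hA (hvs j)
    exact Real.sqrt_pos.mp this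
  have hQA : ∀ j : Fin L, A ^ 2 ≤ ∑ k, vs j k ^ 2 := by
    intro j
    have h1 : A ^ 2 ≤ Real.sqrt (∑ k, vs j k ^ 2) ^ 2 :=
      pow_le_pow_left₀ hA.le (hvs j) 2
    rwa [Real.sq_sqrt (hQpos j).le] at h1
  set SG := ∑ i, ∑ j, matGrad f (prodHouseholder vs) i j ^ 2 with hSG
  have hSGnn : 0 ≤ SG := by
    apply Finset.sum_nonneg; intro i _
    apply Finset.sum_nonneg; intro j _
    positivity
  -- the main per-coordinate bound
  have main : ∀ l : Fin L, ∑ i, partialGradH f vs l i ^ 2 ≤ (48 + 24 * N) / A ^ 2 * SG := by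
    intro l
    set v := vs l with hv
    set base := List.ofFn fun j => householder (vs j) with hbase
    set P₁ := (base.take l).prod with hP₁
    set P₂ := (base.drop (l + 1)).prod with hP₂
    have hdecomp : ∀ w, prodHouseholder (Function.update vs l w) = P₁ * householder w * P₂ :=
      fun w => PGB.prodHouseholder_decomp vs l w
    have hX : prodHouseholder vs = P₁ * householder v * P₂ := by
      have := hdecomp v
      rwa [Function.update_eq_self] at this
    obtain ⟨D, hD, hDval⟩ := PGB.householder_hasFDerivAt v (hQpos l).ne'
    -- the conjugation CLM
    let Φ : Matrix (Fin N) (Fin N) ℝ →L[ℝ] Matrix (Fin N) (Fin N) ℝ :=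
      LinearMap.toContinuousLinearMap
      { toFun := fun M => P₁ * M * P₂
        map_add' := fun M M' => by
          show P₁ * (M + M') * P₂ = P₁ * M * P₂ + P₁ * M' * P₂
          rw [Matrix.mul_add, Matrix.add_mul]
        map_smul' := fun c M => by
          show P₁ * (c • M) * P₂ = c • (P₁ * M * P₂)
          rw [Matrix.mul_smul, Matrix.smul_mul] }
    have hΦ : ∀ M, Φ M = P₁ * M * P₂ := fun M => rfl
    have hm : HasFDerivAt (fun w => P₁ * householder w * P₂) (Φ.comp D) v :=
      Φ.hasFDerivAt.comp v hD
    have hfd : HasFDerivAt (fun w => f (P₁ * householder w * P₂))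
        ((fderiv ℝ f (prodHouseholder vs)).comp (Φ.comp D)) v := by
      rw [hX]
      exact ((hf (P₁ * householder v * P₂)).hasFDerivAt).comp v hm
    have hfderiv : fderiv ℝ (fun w : Fin N → ℝ => f (prodHouseholder (Function.update vs l w))) v
        = (fderiv ℝ f (prodHouseholder vs)).comp (Φ.comp D) := by
      have hfun : (fun w : Fin N → ℝ => f (prodHouseholder (Function.update vs l w)))
          = fun w => f (P₁ * householder w * P₂) := funext fun w => by rw [hdecomp w]
      rw [hfun]
      exact hfd.fderiv
    -- orthogonality of P₁ and P₂
    have hmem : ∀ M ∈ base, Mᵀ * M = 1 := by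
      intro M hM
      rw [List.mem_ofFn] at hM
      obtain ⟨j, hj⟩ := hM
      rw [← hj, PGB.householder_transpose, PGB.householder_mul_self _ (hQpos j).ne']
    have h1 : P₁ᵀ * P₁ = 1 :=
      PGB.prod_orth _ fun M hM => hmem M (List.mem_of_mem_take hM)
    have h2' : P₂ᵀ * P₂ = 1 :=
      PGB.prod_orth _ fun M hM => hmem M (List.mem_of_mem_drop hM)
    have h2 : P₂ * P₂ᵀ = 1 := mul_eq_one_comm.mp h2'
    -- the entries of D applied to basis vectors
    have hsingle : ∀ i : Fin N, (∑ k, v k * (Pi.single i 1 : Fin N → ℝ) k) = v i := by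
      intro i
      simp [Pi.single_apply]
    have hDentry : ∀ (i : Fin N) (a b : Fin N),
        D (Pi.single i 1) a b = 4 * v i / (∑ k, v k ^ 2) ^ 2 * (v a * v b)
          - 2 / (∑ k, v k ^ 2) * (((Pi.single i 1 : Fin N → ℝ) a) * v b + v a * (Pi.single i 1 : Fin N → ℝ) b) := by
      intro i a b
      rw [hDval (Pi.single i 1) a b, hsingle i]
    -- per-i identity for the partial gradient
    have hp : ∀ i : Fin N, partialGradH f vs l i
        = ∑ a, ∑ b, matGrad f (prodHouseholder vs) a b * (P₁ * D (Pi.single i 1) * P₂) a b := by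
      intro i
      unfold partialGradH
      rw [← hv, hfderiv]
      change (fderiv ℝ f (prodHouseholder vs)) (Φ (D (Pi.single i 1))) = _
      rw [PGB.clm_expand (fderiv ℝ f (prodHouseholder vs)) (Φ (D (Pi.single i 1))), hΦ]
      exact Finset.sum_congr rfl fun a _ => Finset.sum_congr rfl fun b _ => by
        rw [mul_comm]; rfl
    -- Cauchy-Schwarz and orthogonal invariance per i
    have hper : ∀ i : Fin N, partialGradH f vs l i ^ 2
        ≤ SG * ∑ a, ∑ b, (D (Pi.single i 1) a b) ^ 2 := by
      intro i
      rw [hp i]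
      calc (∑ a, ∑ b, matGrad f (prodHouseholder vs) a b * (P₁ * D (Pi.single i 1) * P₂) a b) ^ 2
          ≤ SG * ∑ a, ∑ b, ((P₁ * D (Pi.single i 1) * P₂) a b) ^ 2 :=
            PGB.cs_double _ _
        _ = SG * ∑ a, ∑ b, (D (Pi.single i 1) a b) ^ 2 := by
            rw [PGB.sum_sq_conj _ _ _ h1 h2]
    -- sum over i
    have hu : ∀ i : Fin N, ∑ a, ((Pi.single i 1 : Fin N → ℝ) a) ^ 2 = 1 := by
      intro i
      simp [Pi.single_apply, sq]
    calc ∑ i, partialGradH f vs l i ^ 2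
        ≤ ∑ i, SG * ∑ a, ∑ b, (D (Pi.single i 1) a b) ^ 2 :=
          Finset.sum_le_sum fun i _ => hper i
      _ = SG * ∑ i, ∑ a, ∑ b, (D (Pi.single i 1) a b) ^ 2 := by rw [Finset.mul_sum]
      _ = SG * ∑ i, ∑ a, ∑ b, (4 * v i / (∑ k, v k ^ 2) ^ 2 * (v a * v b)
          - 2 / (∑ k, v k ^ 2) * (((Pi.single i 1 : Fin N → ℝ) a) * v b + v a * (Pi.single i 1 : Fin N → ℝ) b)) ^ 2 := by
          congr 1
          exact Finset.sum_congr rfl fun i _ => Finset.sum_congr rfl fun a _ =>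
            Finset.sum_congr rfl fun b _ => by rw [hDentry i a b]
      _ ≤ SG * ((48 + 24 * N) / A ^ 2) := by
          apply mul_le_mul_of_nonneg_left _ hSGnn
          exact PGB.Dsum_bound v (fun i a => (Pi.single i 1 : Fin N → ℝ) a) hu A hA (hQA l)
      _ = (48 + 24 * N) / A ^ 2 * SG := by ring
  -- numeric comparison of constants
  have hconst : (48 + 24 * (N:ℝ)) / A ^ 2 * SG ≤ 24 / A ^ 2 * N * ((N : ℝ) + 2) * SG ∨ N = 0 := by
    rcases Nat.eq_zero_or_pos N with h0 | hpos
    · exact Or.inr h0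
    · left
      apply mul_le_mul_of_nonneg_right _ hSGnn
      have hN1 : (1 : ℝ) ≤ (N : ℝ) := by exact_mod_cast hpos
      rw [div_mul_eq_mul_div, div_mul_eq_mul_div, div_le_div_iff₀ (by positivity) (by positivity)]
      have k1 : (0:ℝ) ≤ (N:ℝ) - 1 := by linarith
      have key := mul_nonneg (mul_nonneg (by norm_num : (0:ℝ) ≤ 24)
        (mul_nonneg k1 (by positivity : (0:ℝ) ≤ (N:ℝ) + 2))) (sq_nonneg A)
      nlinarith [key]
  have mainfinal : ∀ l : Fin L, ∑ i, partialGradH f vs l i ^ 2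
      ≤ 24 / A ^ 2 * N * ((N : ℝ) + 2) * SG := by
    intro l
    rcases hconst with hc | h0
    · exact le_trans (main l) hc
    · subst h0
      simp
  refine ⟨mainfinal, ?_⟩
  calc ∑ l, ∑ i, partialGradH f vs l i ^ 2
      ≤ ∑ _l : Fin L, 24 / A ^ 2 * N * ((N : ℝ) + 2) * SG :=
        Finset.sum_le_sum fun l _ => mainfinal l
    _ = L * (24 / A ^ 2 * N * ((N : ℝ) + 2) * SG) := by
        rw [Finset.sum_const, Finset.card_univ, Fintype.card_fin, nsmul_eq_mul]
    _ = 24 / A ^ 2 * N * ((N : ℝ) + 2) * L * SG := by ring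
end

section
/- Let A > 0 and let f : ℝ^{N×N} → ℝ be differentiable with gradient that is Lipschitz on the orthogonal group with constant M₁ > 0 (i.e. ‖∇f(X′) − ∇f(X″)‖_F ≤ M₁ ‖X′ − X″‖_F for all X′, X″ ∈ O(N)) and bounded on the orthogonal group by M₂ > 0 (i.e. ‖∇f(X)‖_F² ≤ M₂ for all X ∈ O(N)). Let v^(1), …, v^(L) ∈ ℝ^N satisfy ‖v^(l)‖₂ > A for all l, and let d^(1), …, d^(L) ∈ ℝ^N satisfy ⟨v^(l), d^(l)⟩ = 0 for all l. Define h(η) = f( H(v^(1) − η d^(1)) ⋯ H(v^(L) − η d^(L)) ) for η ∈ ℝ. Then h is differentiable at every η ≥ 0 and |h′(η) − h′(0)| ≤ C · ( Σ_{l=1}^{L} ‖d^(l)‖₂² ) · η for all η ≥ 0, where C = (2L/A²) ( 5 √(6 M₂ (N + 2)) + √(2 M₂ + 48 M₁² (N + 2)) ( √(2 (N + 60)) + 8 √(6 N (N + 2)) ) ). -/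
open scoped BigOperators Matrix

attribute [local instance] Matrix.frobeniusSeminormedAddCommGroup
  Matrix.frobeniusNormedAddCommGroup Matrix.frobeniusNormedSpace

/-- The Frobenius norm of a matrix. -/
noncomputable def frob {m n : ℕ} (M : Matrix (Fin m) (Fin n) ℝ) : ℝ :=
  Real.sqrt (∑ i, ∑ j, M i j ^ 2)

set_option maxHeartbeats 1000000

namespace SGDAux

variable {N : ℕ}


lemma norm_eq (M : Matrix (Fin N) (Fin N) ℝ) :
    ‖M‖ = Real.sqrt (∑ i, ∑ j, M i j ^ 2) := by
  rw [Matrix.frobenius_norm_def, Real.sqrt_eq_rpow]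
  congr 1
  refine Finset.sum_congr rfl fun i _ => Finset.sum_congr rfl fun j _ => ?_
  rw [Real.rpow_two, Real.norm_eq_abs, sq_abs]

lemma sum_sq_nonneg (M : Matrix (Fin N) (Fin N) ℝ) : 0 ≤ ∑ i, ∑ j, M i j ^ 2 := by
  positivity

lemma sum_sq_eq_trace (M : Matrix (Fin N) (Fin N) ℝ) :
    ∑ i, ∑ j, M i j ^ 2 = Matrix.trace (Mᵀ * M) := by
  rw [Matrix.trace]
  simp only [Matrix.diag, Matrix.mul_apply, Matrix.transpose_apply, sq]
  exact Finset.sum_comm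

lemma norm_orth_left {U : Matrix (Fin N) (Fin N) ℝ} (hU : Uᵀ * U = 1)
    (X : Matrix (Fin N) (Fin N) ℝ) : ‖U * X‖ = ‖X‖ := by
  rw [norm_eq, norm_eq]
  congr 1
  rw [sum_sq_eq_trace, sum_sq_eq_trace, Matrix.transpose_mul, Matrix.mul_assoc,
    ← Matrix.mul_assoc Uᵀ U X, hU, Matrix.one_mul]

lemma norm_orth_right {U : Matrix (Fin N) (Fin N) ℝ} (hU : Uᵀ * U = 1)
    (X : Matrix (Fin N) (Fin N) ℝ) : ‖X * U‖ = ‖X‖ := by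
  have hU' : U * Uᵀ = 1 := mul_eq_one_comm.mp hU
  rw [norm_eq, norm_eq]
  congr 1
  rw [sum_sq_eq_trace, sum_sq_eq_trace, Matrix.transpose_mul, Matrix.mul_assoc,
    Matrix.trace_mul_comm, Matrix.mul_assoc, Matrix.mul_assoc, hU', Matrix.mul_one]

lemma norm_vecMulVec (a b : Fin N → ℝ) :
    ‖Matrix.vecMulVec a b‖ = Real.sqrt (∑ k, a k ^ 2) * Real.sqrt (∑ k, b k ^ 2) := by
  rw [norm_eq, ← Real.sqrt_mul (by positivity)]
  congr 1
  simp only [Matrix.vecMulVec_apply, mul_pow, ← Finset.mul_sum, ← Finset.sum_mul]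

lemma matmul_bilinear :
    IsBoundedBilinearMap ℝ (fun p : Matrix (Fin N) (Fin N) ℝ × Matrix (Fin N) (Fin N) ℝ =>
      p.1 * p.2) where
  add_left _ _ _ := add_mul _ _ _
  smul_left _ _ _ := smul_mul_assoc _ _ _
  add_right _ _ _ := mul_add _ _ _
  smul_right _ _ _ := mul_smul_comm _ _ _
  bound := ⟨1, one_pos, fun x y => by simpa using Matrix.frobenius_norm_mul x y⟩

lemma hasDerivAt_matmul {X Y : ℝ → Matrix (Fin N) (Fin N) ℝ}
    {X' Y' : Matrix (Fin N) (Fin N) ℝ} {t : ℝ}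
    (hX : HasDerivAt X X' t) (hY : HasDerivAt Y Y' t) :
    HasDerivAt (fun s => X s * Y s) (X' * Y t + X t * Y') t := by
  have h := (matmul_bilinear.hasFDerivAt (X t, Y t)).comp_hasDerivAt t (hX.prodMk hY)
  simp only [IsBoundedBilinearMap.deriv_apply, add_comm, Function.comp_def] at h
  exact h

lemma cs2 (F G : Matrix (Fin N) (Fin N) ℝ) :
    |∑ i, ∑ j, F i j * G i j| ≤ ‖F‖ * ‖G‖ := by
  rw [norm_eq, norm_eq, ← Real.sqrt_mul (sum_sq_nonneg F)]
  rw [← Real.sqrt_sq_eq_abs]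
  apply Real.sqrt_le_sqrt
  calc (∑ i, ∑ j, F i j * G i j) ^ 2
      = (∑ p : Fin N × Fin N, F p.1 p.2 * G p.1 p.2) ^ 2 := by
        rw [← Finset.sum_product']
        rfl
    _ ≤ (∑ p : Fin N × Fin N, F p.1 p.2 ^ 2) * ∑ p : Fin N × Fin N, G p.1 p.2 ^ 2 :=
        Finset.sum_mul_sq_le_sq_mul_sq _ _ _
    _ = (∑ i, ∑ j, F i j ^ 2) * ∑ i, ∑ j, G i j ^ 2 := by
        rw [← Finset.sum_product', ← Finset.sum_product']
        rfl


lemma vecMulVec_mul_self (u : Fin N → ℝ) :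
    Matrix.vecMulVec u u * Matrix.vecMulVec u u = (∑ k, u k ^ 2) • Matrix.vecMulVec u u := by
  ext i j
  simp only [Matrix.mul_apply, Matrix.vecMulVec_apply, Matrix.smul_apply, smul_eq_mul]
  rw [Finset.sum_mul]
  exact Finset.sum_congr rfl fun k _ => by ring

lemma vecMulVec_transpose (a b : Fin N → ℝ) :
    (Matrix.vecMulVec a b)ᵀ = Matrix.vecMulVec b a := by
  ext i j; simp [Matrix.vecMulVec_apply, Matrix.transpose_apply, mul_comm]

lemma householder_transpose (u : Fin N → ℝ) : (householder u)ᵀ = householder u := by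
  rw [householder, Matrix.transpose_sub, Matrix.transpose_one, Matrix.transpose_smul,
    vecMulVec_transpose]

lemma householder_orth {u : Fin N → ℝ} (hu : 0 < ∑ k, u k ^ 2) :
    (householder u)ᵀ * householder u = 1 := by
  rw [householder_transpose, householder]
  have hZ := vecMulVec_mul_self u
  set w := ∑ k, u k ^ 2
  set Z := Matrix.vecMulVec u u with hZdef
  have expand : ((1 : Matrix (Fin N) (Fin N) ℝ) - (2 / w) • Z) * (1 - (2 / w) • Z)
      = 1 - (2 * (2 / w)) • Z + ((2 / w) * (2 / w) * w) • Z := by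
    simp only [Matrix.sub_mul, Matrix.mul_sub, Matrix.one_mul, Matrix.mul_one,
      Matrix.smul_mul, Matrix.mul_smul, hZ, smul_smul]
    module
  rw [expand]
  have hc : (2 / w) * (2 / w) * w = 2 * (2 / w) := by field_simp
  rw [hc, sub_add_cancel]

lemma house (A : ℝ) (hA : 0 < A) (v d : Fin N → ℝ)
    (hv : A ^ 2 < ∑ k, v k ^ 2) (hd : ∑ k, v k * d k = 0) :
    ∃ H' : ℝ → Matrix (Fin N) (Fin N) ℝ, ∀ t : ℝ,
      HasDerivAt (fun s : ℝ => householder fun k => v k - s * d k) (H' t) t ∧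
      (householder fun k => v k - t * d k)ᵀ * (householder fun k => v k - t * d k) = 1 ∧
      ‖H' t‖ ≤ 8 / A * Real.sqrt (∑ k, d k ^ 2) ∧
      ‖(householder fun k => v k - t * d k) - (householder fun k => v k - 0 * d k)‖
        ≤ 8 / A * Real.sqrt (∑ k, d k ^ 2) * |t| ∧
      ‖H' t - H' 0‖ ≤ 12 / A ^ 2 * (∑ k, d k ^ 2) * |t| := by
  set W := ∑ k, v k ^ 2 with hWdef
  set D := ∑ k, d k ^ 2 with hDdef
  have hD : 0 ≤ D := by positivity
  have hW : 0 < W := lt_trans (by positivity) hv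
  have hw : ∀ t : ℝ, 0 < W + t ^ 2 * D := fun t => by positivity
  have hsum : ∀ t : ℝ, ∑ k, (v k - t * d k) ^ 2 = W + t ^ 2 * D := by
    intro t
    have : ∀ k, (v k - t * d k) ^ 2 = v k ^ 2 - 2 * t * (v k * d k) + t ^ 2 * d k ^ 2 :=
      fun k => by ring
    rw [Finset.sum_congr rfl fun k _ => this k, Finset.sum_add_distrib,
      Finset.sum_sub_distrib, ← Finset.mul_sum, ← Finset.mul_sum, hd, mul_zero, sub_zero]
  set Cvv := Matrix.vecMulVec v v with hCvv
  set Cvd := Matrix.vecMulVec v d with hCvd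
  set Cdv := Matrix.vecMulVec d v with hCdv
  set Cdd := Matrix.vecMulVec d d with hCdd
  have hfun : (fun s : ℝ => householder fun k => v k - s * d k)
      = fun s : ℝ => (1 : Matrix (Fin N) (Fin N) ℝ)
          + ((-2 / (W + s ^ 2 * D)) • Cvv + (2 * s / (W + s ^ 2 * D)) • (Cvd + Cdv)
            + (-(2 * s ^ 2) / (W + s ^ 2 * D)) • Cdd) := by
    funext s
    rw [householder, hsum s]
    have hvmv : (Matrix.vecMulVec (fun k => v k - s * d k) fun k => v k - s * d k)
        = Cvv - s • (Cvd + Cdv) + s ^ 2 • Cdd := by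
      ext i j
      simp only [Matrix.vecMulVec_apply, Matrix.sub_apply, Matrix.add_apply, Matrix.smul_apply,
        smul_eq_mul, hCvv, hCvd, hCdv, hCdd]
      ring
    rw [hvmv]
    module
  -- the derivative
  refine ⟨fun t => (4 * t * D / (W + t ^ 2 * D) ^ 2) • Cvv
      + ((2 * (W + t ^ 2 * D) - 4 * t ^ 2 * D) / (W + t ^ 2 * D) ^ 2) • (Cvd + Cdv)
      + ((4 * t ^ 3 * D - 4 * t * (W + t ^ 2 * D)) / (W + t ^ 2 * D) ^ 2) • Cdd, ?_⟩
  intro t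
  have hwt : HasDerivAt (fun s : ℝ => W + s ^ 2 * D) (2 * t * D) t := by
    simpa using ((hasDerivAt_pow 2 t).mul_const D).const_add W
  have hα : HasDerivAt (fun s : ℝ => -2 / (W + s ^ 2 * D))
      (4 * t * D / (W + t ^ 2 * D) ^ 2) t := by
    have h := (hasDerivAt_const t (-2 : ℝ)).div hwt (hw t).ne'
    exact h.congr_deriv (by ring)
  have hβ : HasDerivAt (fun s : ℝ => 2 * s / (W + s ^ 2 * D))
      ((2 * (W + t ^ 2 * D) - 4 * t ^ 2 * D) / (W + t ^ 2 * D) ^ 2) t := by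
    have hnum : HasDerivAt (fun s : ℝ => 2 * s) 2 t := by
      simpa using (hasDerivAt_id t).const_mul (2 : ℝ)
    have h := hnum.div hwt (hw t).ne'
    exact h.congr_deriv (by ring)
  have hγ : HasDerivAt (fun s : ℝ => -(2 * s ^ 2) / (W + s ^ 2 * D))
      ((4 * t ^ 3 * D - 4 * t * (W + t ^ 2 * D)) / (W + t ^ 2 * D) ^ 2) t := by
    have hnum : HasDerivAt (fun s : ℝ => -(2 * s ^ 2)) (-(4 * t)) t := by
      have := ((hasDerivAt_pow 2 t).const_mul (2 : ℝ)).neg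
      exact this.congr_deriv (by ring)
    have h := hnum.div hwt (hw t).ne'
    exact h.congr_deriv (by field_simp; ring)
  have hderiv : HasDerivAt (fun s : ℝ => householder fun k => v k - s * d k)
      ((4 * t * D / (W + t ^ 2 * D) ^ 2) • Cvv
      + ((2 * (W + t ^ 2 * D) - 4 * t ^ 2 * D) / (W + t ^ 2 * D) ^ 2) • (Cvd + Cdv)
      + ((4 * t ^ 3 * D - 4 * t * (W + t ^ 2 * D)) / (W + t ^ 2 * D) ^ 2) • Cdd) t := by
    rw [hfun]
    exact (((hα.smul_const Cvv).add (hβ.smul_const (Cvd + Cdv))).add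
      (hγ.smul_const Cdd)).const_add 1
  -- common abbreviations for the norm estimates
  have hr0 : 0 < Real.sqrt (W + t ^ 2 * D) := Real.sqrt_pos.mpr (hw t)
  have hp0 : 0 < Real.sqrt W := Real.sqrt_pos.mpr hW
  have hs0 : 0 ≤ Real.sqrt D := Real.sqrt_nonneg D
  set r := Real.sqrt (W + t ^ 2 * D) with hrdef
  set p := Real.sqrt W with hpdef
  set s := Real.sqrt D with hsdef
  have hr2 : r ^ 2 = W + t ^ 2 * D := Real.sq_sqrt (hw t).le
  have hp2 : p ^ 2 = W := Real.sq_sqrt hW.le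
  have hs2 : s ^ 2 = D := Real.sq_sqrt hD
  have hAr : A < r := by
    rw [hrdef]; exact (Real.lt_sqrt hA.le).mpr (by nlinarith [sq_nonneg t, hD, hv])
  have hAp : A < p := by rw [hpdef]; exact (Real.lt_sqrt hA.le).mpr hv
  have hpr : p ≤ r := Real.sqrt_le_sqrt (by nlinarith [sq_nonneg t, hD])
  have hts : |t| * s ≤ r := by
    rw [hsdef, ← Real.sqrt_sq_eq_abs, ← Real.sqrt_mul (sq_nonneg t)]
    exact Real.sqrt_le_sqrt (by nlinarith [hW])
  have habs_t : 0 ≤ |t| := abs_nonneg t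
  have hnCvv : ‖Cvv‖ = p * p := by rw [hCvv, norm_vecMulVec, ← hWdef, ← hpdef]
  have hnCvd : ‖Cvd‖ = p * s := by
    rw [hCvd, norm_vecMulVec, ← hWdef, ← hDdef, ← hpdef, ← hsdef]
  have hnCdv : ‖Cdv‖ = s * p := by
    rw [hCdv, norm_vecMulVec, ← hWdef, ← hDdef, ← hpdef, ← hsdef]
  have hnCdd : ‖Cdd‖ = s * s := by rw [hCdd, norm_vecMulVec, ← hDdef, ← hsdef]
  refine ⟨hderiv, householder_orth (by rw [hsum t]; exact hw t), ?_, ?_, ?_⟩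
  · -- bound on ‖H' t‖
    have hid : (4 * t * D / (W + t ^ 2 * D) ^ 2) • Cvv
        + ((2 * (W + t ^ 2 * D) - 4 * t ^ 2 * D) / (W + t ^ 2 * D) ^ 2) • (Cvd + Cdv)
        + ((4 * t ^ 3 * D - 4 * t * (W + t ^ 2 * D)) / (W + t ^ 2 * D) ^ 2) • Cdd
        = (4 * t * D / (W + t ^ 2 * D) ^ 2)
            • Matrix.vecMulVec (fun k => v k - t * d k) (fun k => v k - t * d k)
          + (2 / (W + t ^ 2 * D)) • (Matrix.vecMulVec d (fun k => v k - t * d k)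
              + Matrix.vecMulVec (fun k => v k - t * d k) d) := by
      ext i j
      simp only [Matrix.add_apply, Matrix.smul_apply, Matrix.vecMulVec_apply, smul_eq_mul,
        hCvv, hCvd, hCdv, hCdd]
      field_simp
      ring
    beta_reduce
    rw [hid]
    have hnuu : ‖Matrix.vecMulVec (fun k => v k - t * d k) (fun k => v k - t * d k)‖
        = r * r := by rw [norm_vecMulVec, hsum t, ← hrdef]
    have hndu : ‖Matrix.vecMulVec d (fun k => v k - t * d k)‖ = s * r := by
      rw [norm_vecMulVec, ← hDdef, hsum t, ← hsdef, ← hrdef]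
    have hnud : ‖Matrix.vecMulVec (fun k => v k - t * d k) d‖ = r * s := by
      rw [norm_vecMulVec, ← hDdef, hsum t, ← hsdef, ← hrdef]
    have habs1 : |4 * t * D / (W + t ^ 2 * D) ^ 2| = 4 * |t| * D / (W + t ^ 2 * D) ^ 2 := by
      rw [abs_div, abs_of_pos (by positivity : (0:ℝ) < (W + t ^ 2 * D) ^ 2), abs_mul, abs_mul,
        abs_of_nonneg (by norm_num : (0:ℝ) ≤ 4), abs_of_nonneg hD]
    have habs2 : |2 / (W + t ^ 2 * D)| = 2 / (W + t ^ 2 * D) := abs_of_pos (by positivity)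
    calc ‖(4 * t * D / (W + t ^ 2 * D) ^ 2)
            • Matrix.vecMulVec (fun k => v k - t * d k) (fun k => v k - t * d k)
          + (2 / (W + t ^ 2 * D)) • (Matrix.vecMulVec d (fun k => v k - t * d k)
              + Matrix.vecMulVec (fun k => v k - t * d k) d)‖
        ≤ |4 * t * D / (W + t ^ 2 * D) ^ 2| * (r * r)
            + |2 / (W + t ^ 2 * D)| * (s * r + r * s) := by
          refine le_trans (norm_add_le _ _) ?_
          rw [norm_smul, norm_smul, Real.norm_eq_abs, Real.norm_eq_abs, hnuu]
          exact add_le_add le_rfl (mul_le_mul_of_nonneg_left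
            (le_trans (norm_add_le _ _) (le_of_eq (by rw [hndu, hnud])))
            (abs_nonneg _))
      _ ≤ 8 / A * s := by
          rw [habs1, habs2, ← hr2, ← hs2]
          have key : 4 * |t| * s ^ 2 / (r ^ 2) ^ 2 * (r * r) + 2 / r ^ 2 * (s * r + r * s)
              = (4 * |t| * s ^ 2 + 4 * s * r) / r ^ 2 := by
            field_simp; ring
          rw [key, show 8 / A * s = 8 * s / A from by ring,
            div_le_div_iff₀ (by positivity) hA]
          have g1 : s * (A * (|t| * s)) ≤ s * (A * r) :=
            mul_le_mul_of_nonneg_left (mul_le_mul_of_nonneg_left hts hA.le) hs0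
          have g2 : s * (A * r) ≤ s * (r * r) :=
            mul_le_mul_of_nonneg_left (mul_le_mul_of_nonneg_right hAr.le hr0.le) hs0
          linarith [g1, g2]
  · -- bound on ‖H t - H 0‖
    have h1 : (householder fun k => v k - t * d k)
        = 1 + ((-2 / (W + t ^ 2 * D)) • Cvv + (2 * t / (W + t ^ 2 * D)) • (Cvd + Cdv)
          + (-(2 * t ^ 2) / (W + t ^ 2 * D)) • Cdd) := congrFun hfun t
    have h0 : (householder fun k => v k - 0 * d k)
        = 1 + ((-2 / (W + (0:ℝ) ^ 2 * D)) • Cvv + (2 * 0 / (W + (0:ℝ) ^ 2 * D)) • (Cvd + Cdv)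
          + (-(2 * (0:ℝ) ^ 2) / (W + (0:ℝ) ^ 2 * D)) • Cdd) := congrFun hfun 0
    have e0 : W + (0:ℝ) ^ 2 * D = W := by norm_num
    have hdiff : (householder fun k => v k - t * d k) - (householder fun k => v k - 0 * d k)
        = (2 * t ^ 2 * D / ((W + t ^ 2 * D) * W)) • Cvv
          + (2 * t / (W + t ^ 2 * D)) • (Cvd + Cdv)
          + (-(2 * t ^ 2) / (W + t ^ 2 * D)) • Cdd := by
      rw [h1, h0, e0]
      have sa : 2 * t ^ 2 * D / ((W + t ^ 2 * D) * W) = -2 / (W + t ^ 2 * D) - -2 / W := by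
        field_simp; ring
      rw [sa]
      module
    rw [hdiff]
    have habs1 : |2 * t ^ 2 * D / ((W + t ^ 2 * D) * W)|
        = 2 * t ^ 2 * D / ((W + t ^ 2 * D) * W) :=
      abs_of_nonneg (div_nonneg (mul_nonneg (mul_nonneg (by norm_num) (sq_nonneg t)) hD)
        (mul_nonneg (hw t).le hW.le))
    have habs2 : |2 * t / (W + t ^ 2 * D)| = 2 * |t| / (W + t ^ 2 * D) := by
      rw [abs_div, abs_of_pos (hw t), abs_mul, abs_of_nonneg (by norm_num : (0:ℝ) ≤ 2)]
    have habs3 : |-(2 * t ^ 2) / (W + t ^ 2 * D)| = 2 * t ^ 2 / (W + t ^ 2 * D) := by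
      rw [abs_div, abs_of_pos (hw t), abs_neg,
        abs_of_nonneg (mul_nonneg (by norm_num : (0:ℝ) ≤ 2) (sq_nonneg t))]
    calc ‖(2 * t ^ 2 * D / ((W + t ^ 2 * D) * W)) • Cvv
          + (2 * t / (W + t ^ 2 * D)) • (Cvd + Cdv)
          + (-(2 * t ^ 2) / (W + t ^ 2 * D)) • Cdd‖
        ≤ |2 * t ^ 2 * D / ((W + t ^ 2 * D) * W)| * (p * p)
          + |2 * t / (W + t ^ 2 * D)| * (p * s + s * p)
          + |-(2 * t ^ 2) / (W + t ^ 2 * D)| * (s * s) := by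
          refine le_trans (norm_add_le _ _) (add_le_add (le_trans (norm_add_le _ _) ?_) ?_)
          · rw [norm_smul, norm_smul, Real.norm_eq_abs, Real.norm_eq_abs, hnCvv]
            exact add_le_add le_rfl (mul_le_mul_of_nonneg_left
              (le_trans (norm_add_le _ _) (le_of_eq (by rw [hnCvd, hnCdv])))
              (abs_nonneg _))
          · rw [norm_smul, Real.norm_eq_abs, hnCdd]
      _ ≤ 8 / A * s * |t| := by
          rw [habs1, habs2, habs3, ← hr2, ← hp2, ← hs2]
          have key : 2 * t ^ 2 * s ^ 2 / (r ^ 2 * p ^ 2) * (p * p)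
              + 2 * |t| / r ^ 2 * (p * s + s * p) + 2 * t ^ 2 / r ^ 2 * (s * s)
              = (4 * t ^ 2 * s ^ 2 + 4 * |t| * p * s) / r ^ 2 := by
            field_simp; ring
          rw [key, show 8 / A * s * |t| = 8 * s * |t| / A from by ring,
            div_le_div_iff₀ (by positivity) hA]
          have hT : t ^ 2 = |t| ^ 2 := (sq_abs t).symm
          rw [hT]
          have hts0 : 0 ≤ |t| * s := mul_nonneg habs_t hs0
          have q1 : A * ((|t| * s) * (|t| * s)) ≤ A * ((|t| * s) * r) :=
            mul_le_mul_of_nonneg_left (mul_le_mul_of_nonneg_left hts hts0) hA.le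
          have q2 : A * ((|t| * s) * r) ≤ r * ((|t| * s) * r) :=
            mul_le_mul_of_nonneg_right hAr.le (mul_nonneg hts0 hr0.le)
          have q3 : p * A ≤ r * r := mul_le_mul hpr hAr.le hA.le hr0.le
          have q4 : (|t| * s) * (p * A) ≤ (|t| * s) * (r * r) :=
            mul_le_mul_of_nonneg_left q3 hts0
          linarith [q1, q2, q4]
  · -- bound on ‖H' t - H' 0‖
    have hdiff : ((4 * t * D / (W + t ^ 2 * D) ^ 2) • Cvv
        + ((2 * (W + t ^ 2 * D) - 4 * t ^ 2 * D) / (W + t ^ 2 * D) ^ 2) • (Cvd + Cdv)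
        + ((4 * t ^ 3 * D - 4 * t * (W + t ^ 2 * D)) / (W + t ^ 2 * D) ^ 2) • Cdd)
        - ((4 * 0 * D / (W + 0 ^ 2 * D) ^ 2) • Cvv
        + ((2 * (W + 0 ^ 2 * D) - 4 * 0 ^ 2 * D) / (W + 0 ^ 2 * D) ^ 2) • (Cvd + Cdv)
        + ((4 * 0 ^ 3 * D - 4 * 0 * (W + 0 ^ 2 * D)) / (W + 0 ^ 2 * D) ^ 2) • Cdd)
        = (4 * t * D / (W + t ^ 2 * D) ^ 2)
            • Matrix.vecMulVec (fun k => v k - t * d k) (fun k => v k - t * d k)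
          + (-(2 * t ^ 2 * D) / ((W + t ^ 2 * D) * W)) • (Cvd + Cdv)
          + (-(4 * t) / (W + t ^ 2 * D)) • Cdd := by
      ext i j
      simp only [Matrix.add_apply, Matrix.sub_apply, Matrix.smul_apply, Matrix.vecMulVec_apply,
        smul_eq_mul, hCvv, hCvd, hCdv, hCdd]
      field_simp
      ring
    beta_reduce
    rw [hdiff]
    have hnuu : ‖Matrix.vecMulVec (fun k => v k - t * d k) (fun k => v k - t * d k)‖
        = r * r := by rw [norm_vecMulVec, hsum t, ← hrdef]
    have habs1 : |4 * t * D / (W + t ^ 2 * D) ^ 2| = 4 * |t| * D / (W + t ^ 2 * D) ^ 2 := by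
      rw [abs_div, abs_of_pos (by positivity : (0:ℝ) < (W + t ^ 2 * D) ^ 2), abs_mul, abs_mul,
        abs_of_nonneg (by norm_num : (0:ℝ) ≤ 4), abs_of_nonneg hD]
    have habs2 : |-(2 * t ^ 2 * D) / ((W + t ^ 2 * D) * W)|
        = 2 * t ^ 2 * D / ((W + t ^ 2 * D) * W) := by
      rw [abs_div, abs_neg, abs_of_pos (mul_pos (hw t) hW),
        abs_of_nonneg (mul_nonneg (mul_nonneg (by norm_num : (0:ℝ) ≤ 2) (sq_nonneg t)) hD)]
    have habs3 : |-(4 * t) / (W + t ^ 2 * D)| = 4 * |t| / (W + t ^ 2 * D) := by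
      rw [abs_div, abs_neg, abs_of_pos (hw t), abs_mul,
        abs_of_nonneg (by norm_num : (0:ℝ) ≤ 4)]
    calc ‖(4 * t * D / (W + t ^ 2 * D) ^ 2)
            • Matrix.vecMulVec (fun k => v k - t * d k) (fun k => v k - t * d k)
          + (-(2 * t ^ 2 * D) / ((W + t ^ 2 * D) * W)) • (Cvd + Cdv)
          + (-(4 * t) / (W + t ^ 2 * D)) • Cdd‖
        ≤ |4 * t * D / (W + t ^ 2 * D) ^ 2| * (r * r)
          + |-(2 * t ^ 2 * D) / ((W + t ^ 2 * D) * W)| * (p * s + s * p)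
          + |-(4 * t) / (W + t ^ 2 * D)| * (s * s) := by
          refine le_trans (norm_add_le _ _) (add_le_add (le_trans (norm_add_le _ _) ?_) ?_)
          · rw [norm_smul, norm_smul, Real.norm_eq_abs, Real.norm_eq_abs, hnuu]
            exact add_le_add le_rfl (mul_le_mul_of_nonneg_left
              (le_trans (norm_add_le _ _) (le_of_eq (by rw [hnCvd, hnCdv])))
              (abs_nonneg _))
          · rw [norm_smul, Real.norm_eq_abs, hnCdd]
      _ ≤ 12 / A ^ 2 * D * |t| := by
          rw [habs1, habs2, habs3, ← hr2, ← hp2, ← hs2]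
          have key : 4 * |t| * s ^ 2 / (r ^ 2) ^ 2 * (r * r)
              + 2 * t ^ 2 * s ^ 2 / (r ^ 2 * p ^ 2) * (p * s + s * p)
              + 4 * |t| / r ^ 2 * (s * s)
              = (8 * |t| * s ^ 2 * p + 4 * t ^ 2 * s ^ 3) / (r ^ 2 * p) := by
            field_simp; ring
          rw [key, show 12 / A ^ 2 * s ^ 2 * |t| = 12 * s ^ 2 * |t| / A ^ 2 from by ring,
            div_le_div_iff₀ (by positivity) (by positivity)]
          have hT : t ^ 2 = |t| ^ 2 := (sq_abs t).symm
          rw [hT]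
          have hTss : 0 ≤ |t| * (s * s) := mul_nonneg habs_t (mul_nonneg hs0 hs0)
          have e2 : A * A ≤ r * r := mul_le_mul hAr.le hAr.le hA.le hr0.le
          have e3 : A * A ≤ r * p := mul_le_mul hAr.le hAp.le hA.le hr0.le
          have m1 : (|t| * (s * s) * p) * (A * A) ≤ (|t| * (s * s) * p) * (r * r) :=
            mul_le_mul_of_nonneg_left e2 (mul_nonneg hTss hp0.le)
          have u1 : (|t| * s) * (|t| * (s * s)) ≤ r * (|t| * (s * s)) :=
            mul_le_mul_of_nonneg_right hts hTss
          have m2' : ((|t| * s) * (|t| * (s * s))) * (A * A)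
              ≤ (r * (|t| * (s * s))) * (A * A) :=
            mul_le_mul_of_nonneg_right u1 (mul_nonneg hA.le hA.le)
          have m2 : (r * (|t| * (s * s))) * (A * A) ≤ (r * (|t| * (s * s))) * (r * p) :=
            mul_le_mul_of_nonneg_left e3 (mul_nonneg hr0.le hTss)
          linarith [m1, m2, m2']

lemma prodHouseholder_succ {L : ℕ} (vs : Fin (L + 1) → Fin N → ℝ) :
    prodHouseholder vs = householder (vs 0) * prodHouseholder (fun l => vs l.succ) := by
  rw [prodHouseholder, List.ofFn_succ, List.prod_cons]
  rfl

lemma prod_lemma (A : ℝ) (hA : 0 < A) :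
    ∀ (L : ℕ) (v d : Fin L → Fin N → ℝ),
      (∀ l, A ^ 2 < ∑ k, v l k ^ 2) → (∀ l, ∑ k, v l k * d l k = 0) →
      ∃ P' : ℝ → Matrix (Fin N) (Fin N) ℝ, ∀ t : ℝ,
        HasDerivAt (fun s : ℝ => prodHouseholder fun l k => v l k - s * d l k) (P' t) t ∧
        (prodHouseholder fun l k => v l k - t * d l k)ᵀ
            * (prodHouseholder fun l k => v l k - t * d l k) = 1 ∧
        ‖P' t‖ ≤ 8 / A * ∑ l, Real.sqrt (∑ k, d l k ^ 2) ∧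
        ‖(prodHouseholder fun l k => v l k - t * d l k)
            - (prodHouseholder fun l k => v l k - 0 * d l k)‖
          ≤ 8 / A * (∑ l, Real.sqrt (∑ k, d l k ^ 2)) * |t| ∧
        ‖P' t - P' 0‖ ≤ (12 / A ^ 2 * (∑ l, ∑ k, d l k ^ 2)
            + (8 / A * ∑ l, Real.sqrt (∑ k, d l k ^ 2)) ^ 2) * |t| := by
  intro L
  induction L with
  | zero =>
    intro v d hv hd
    refine ⟨fun _ => 0, fun t => ?_⟩
    have hP : ∀ s : ℝ, (prodHouseholder fun l k => v l k - s * d l k)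
        = (1 : Matrix (Fin N) (Fin N) ℝ) := fun s => by
      rw [prodHouseholder]
      simp
    have hfun : (fun s : ℝ => prodHouseholder fun l k => v l k - s * d l k)
        = fun _ : ℝ => (1 : Matrix (Fin N) (Fin N) ℝ) := funext hP
    refine ⟨?_, ?_, ?_, ?_, ?_⟩
    · rw [hfun]; exact hasDerivAt_const t 1
    · rw [hP t]; simp
    · simp
    · rw [hP t, hP 0, sub_self]; simp
    · simp
  | succ L ih =>
    intro v d hv hd
    obtain ⟨R', hR⟩ := ih (fun l => v l.succ) (fun l => d l.succ)
      (fun l => hv l.succ) (fun l => hd l.succ)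
    obtain ⟨H', hH⟩ := house A hA (v 0) (d 0) (hv 0) (hd 0)
    refine ⟨fun t => H' t * (prodHouseholder fun l k => v l.succ k - t * d l.succ k)
      + (householder fun k => v 0 k - t * d 0 k) * R' t, fun t => ?_⟩
    obtain ⟨hHd, hHo, hHn, hHdiff, hHdd⟩ := hH t
    obtain ⟨hRd, hRo, hRn, hRdiff, hRdd⟩ := hR t
    obtain ⟨hHd0, hHo0, hHn0, -, -⟩ := hH 0
    obtain ⟨hRd0, hRo0, hRn0, -, -⟩ := hR 0
    have hsplit : ∀ s : ℝ, (prodHouseholder fun l k => v l k - s * d l k)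
        = (householder fun k => v 0 k - s * d 0 k)
          * (prodHouseholder fun l k => v l.succ k - s * d l.succ k) := by
      intro s
      rw [prodHouseholder_succ]
    have hfun : (fun s : ℝ => prodHouseholder fun l k => v l k - s * d l k)
        = fun s : ℝ => (householder fun k => v 0 k - s * d 0 k)
          * (prodHouseholder fun l k => v l.succ k - s * d l.succ k) := funext hsplit
    have hb0 : (0:ℝ) ≤ 8 / A * Real.sqrt (∑ k, d 0 k ^ 2) :=
      mul_nonneg (div_nonneg (by norm_num) hA.le) (Real.sqrt_nonneg _)
    have hB : (0:ℝ) ≤ 8 / A * ∑ l : Fin L, Real.sqrt (∑ k, d l.succ k ^ 2) :=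
      mul_nonneg (div_nonneg (by norm_num) hA.le)
        (Finset.sum_nonneg fun _ _ => Real.sqrt_nonneg _)
    have habs_t : (0:ℝ) ≤ |t| := abs_nonneg t
    refine ⟨?_, ?_, ?_, ?_, ?_⟩
    · rw [hfun]
      exact hasDerivAt_matmul hHd hRd
    · rw [hsplit t, Matrix.transpose_mul, Matrix.mul_assoc,
        ← Matrix.mul_assoc (householder fun k => v 0 k - t * d 0 k)ᵀ, hHo, Matrix.one_mul, hRo]
    · calc ‖H' t * (prodHouseholder fun l k => v l.succ k - t * d l.succ k)
            + (householder fun k => v 0 k - t * d 0 k) * R' t‖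
          ≤ ‖H' t * (prodHouseholder fun l k => v l.succ k - t * d l.succ k)‖
            + ‖(householder fun k => v 0 k - t * d 0 k) * R' t‖ := norm_add_le _ _
        _ = ‖H' t‖ + ‖R' t‖ := by rw [norm_orth_right hRo, norm_orth_left hHo]
        _ ≤ 8 / A * Real.sqrt (∑ k, d 0 k ^ 2)
            + 8 / A * ∑ l : Fin L, Real.sqrt (∑ k, d l.succ k ^ 2) := add_le_add hHn hRn
        _ = 8 / A * ∑ l : Fin (L + 1), Real.sqrt (∑ k, d l k ^ 2) := by
            rw [Fin.sum_univ_succ]; ring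
    · rw [hsplit t, hsplit 0]
      have hiden : (householder fun k => v 0 k - t * d 0 k)
            * (prodHouseholder fun l k => v l.succ k - t * d l.succ k)
          - (householder fun k => v 0 k - 0 * d 0 k)
            * (prodHouseholder fun l k => v l.succ k - 0 * d l.succ k)
          = ((householder fun k => v 0 k - t * d 0 k)
              - (householder fun k => v 0 k - 0 * d 0 k))
            * (prodHouseholder fun l k => v l.succ k - t * d l.succ k)
          + (householder fun k => v 0 k - 0 * d 0 k)
            * ((prodHouseholder fun l k => v l.succ k - t * d l.succ k)
              - (prodHouseholder fun l k => v l.succ k - 0 * d l.succ k)) := by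
        rw [Matrix.sub_mul, Matrix.mul_sub]
        abel
      rw [hiden]
      calc ‖_ + _‖
          ≤ ‖((householder fun k => v 0 k - t * d 0 k)
              - (householder fun k => v 0 k - 0 * d 0 k))
            * (prodHouseholder fun l k => v l.succ k - t * d l.succ k)‖
            + ‖(householder fun k => v 0 k - 0 * d 0 k)
            * ((prodHouseholder fun l k => v l.succ k - t * d l.succ k)
              - (prodHouseholder fun l k => v l.succ k - 0 * d l.succ k))‖ := norm_add_le _ _
        _ = ‖(householder fun k => v 0 k - t * d 0 k)
              - (householder fun k => v 0 k - 0 * d 0 k)‖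
            + ‖(prodHouseholder fun l k => v l.succ k - t * d l.succ k)
              - (prodHouseholder fun l k => v l.succ k - 0 * d l.succ k)‖ := by
            rw [norm_orth_right hRo, norm_orth_left hHo0]
        _ ≤ 8 / A * Real.sqrt (∑ k, d 0 k ^ 2) * |t|
            + 8 / A * (∑ l : Fin L, Real.sqrt (∑ k, d l.succ k ^ 2)) * |t| :=
            add_le_add hHdiff hRdiff
        _ = 8 / A * (∑ l : Fin (L + 1), Real.sqrt (∑ k, d l k ^ 2)) * |t| := by
            rw [Fin.sum_univ_succ]; ring
    · have hide2 : (H' t * (prodHouseholder fun l k => v l.succ k - t * d l.succ k)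
            + (householder fun k => v 0 k - t * d 0 k) * R' t)
          - (H' 0 * (prodHouseholder fun l k => v l.succ k - 0 * d l.succ k)
            + (householder fun k => v 0 k - 0 * d 0 k) * R' 0)
          = ((H' t - H' 0) * (prodHouseholder fun l k => v l.succ k - t * d l.succ k)
            + H' 0 * ((prodHouseholder fun l k => v l.succ k - t * d l.succ k)
              - (prodHouseholder fun l k => v l.succ k - 0 * d l.succ k)))
          + (((householder fun k => v 0 k - t * d 0 k)
              - (householder fun k => v 0 k - 0 * d 0 k)) * R' t
            + (householder fun k => v 0 k - 0 * d 0 k) * (R' t - R' 0)) := by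
        simp only [Matrix.sub_mul, Matrix.mul_sub]
        abel
      rw [hide2]
      have n1 : ‖(H' t - H' 0) * (prodHouseholder fun l k => v l.succ k - t * d l.succ k)‖
          ≤ 12 / A ^ 2 * (∑ k, d 0 k ^ 2) * |t| := by
        rw [norm_orth_right hRo]; exact hHdd
      have n2 : ‖H' 0 * ((prodHouseholder fun l k => v l.succ k - t * d l.succ k)
            - (prodHouseholder fun l k => v l.succ k - 0 * d l.succ k))‖
          ≤ (8 / A * Real.sqrt (∑ k, d 0 k ^ 2))
            * (8 / A * (∑ l : Fin L, Real.sqrt (∑ k, d l.succ k ^ 2)) * |t|) := by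
        refine le_trans (Matrix.frobenius_norm_mul _ _) ?_
        exact mul_le_mul hHn0 hRdiff (norm_nonneg _) hb0
      have n3 : ‖((householder fun k => v 0 k - t * d 0 k)
            - (householder fun k => v 0 k - 0 * d 0 k)) * R' t‖
          ≤ (8 / A * Real.sqrt (∑ k, d 0 k ^ 2) * |t|)
            * (8 / A * ∑ l : Fin L, Real.sqrt (∑ k, d l.succ k ^ 2)) := by
        refine le_trans (Matrix.frobenius_norm_mul _ _) ?_
        exact mul_le_mul hHdiff hRn (norm_nonneg _) (mul_nonneg hb0 habs_t)
      have n4 : ‖(householder fun k => v 0 k - 0 * d 0 k) * (R' t - R' 0)‖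
          ≤ (12 / A ^ 2 * (∑ l : Fin L, ∑ k, d l.succ k ^ 2)
            + (8 / A * ∑ l : Fin L, Real.sqrt (∑ k, d l.succ k ^ 2)) ^ 2) * |t| := by
        rw [norm_orth_left hHo0]; exact hRdd
      calc ‖_ + _‖
          ≤ ‖(H' t - H' 0) * (prodHouseholder fun l k => v l.succ k - t * d l.succ k)
            + H' 0 * ((prodHouseholder fun l k => v l.succ k - t * d l.succ k)
              - (prodHouseholder fun l k => v l.succ k - 0 * d l.succ k))‖
            + ‖((householder fun k => v 0 k - t * d 0 k)
              - (householder fun k => v 0 k - 0 * d 0 k)) * R' t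
            + (householder fun k => v 0 k - 0 * d 0 k) * (R' t - R' 0)‖ := norm_add_le _ _
        _ ≤ (12 / A ^ 2 * (∑ k, d 0 k ^ 2) * |t|
              + (8 / A * Real.sqrt (∑ k, d 0 k ^ 2))
                * (8 / A * (∑ l : Fin L, Real.sqrt (∑ k, d l.succ k ^ 2)) * |t|))
            + ((8 / A * Real.sqrt (∑ k, d 0 k ^ 2) * |t|)
                * (8 / A * ∑ l : Fin L, Real.sqrt (∑ k, d l.succ k ^ 2))
              + (12 / A ^ 2 * (∑ l : Fin L, ∑ k, d l.succ k ^ 2)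
                + (8 / A * ∑ l : Fin L, Real.sqrt (∑ k, d l.succ k ^ 2)) ^ 2) * |t|) :=
            add_le_add (le_trans (norm_add_le _ _) (add_le_add n1 n2))
              (le_trans (norm_add_le _ _) (add_le_add n3 n4))
        _ ≤ (12 / A ^ 2 * (∑ l : Fin (L + 1), ∑ k, d l k ^ 2)
            + (8 / A * ∑ l : Fin (L + 1), Real.sqrt (∑ k, d l k ^ 2)) ^ 2) * |t| := by
            rw [Fin.sum_univ_succ (f := fun l : Fin (L + 1) => ∑ k, d l k ^ 2),
              Fin.sum_univ_succ (f := fun l : Fin (L + 1) => Real.sqrt (∑ k, d l k ^ 2))]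
            have hx2 : Real.sqrt (∑ k, d 0 k ^ 2) ^ 2 = ∑ k, d 0 k ^ 2 :=
              Real.sq_sqrt (by positivity)
            nlinarith [mul_nonneg (mul_nonneg hb0 hb0) habs_t]

lemma frob_eq_norm (M : Matrix (Fin N) (Fin N) ℝ) : frob M = ‖M‖ := by
  rw [frob, norm_eq]

lemma fderiv_pairing (f : Matrix (Fin N) (Fin N) ℝ → ℝ) (X M : Matrix (Fin N) (Fin N) ℝ) :
    fderiv ℝ f X M = ∑ i, ∑ j, M i j * matGrad f X i j := by
  conv_lhs => rw [Matrix.matrix_eq_sum_single M]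
  rw [map_sum]
  refine Finset.sum_congr rfl fun i _ => ?_
  rw [map_sum]
  refine Finset.sum_congr rfl fun j _ => ?_
  have : Matrix.single i j (M i j) = (M i j) • Matrix.single i j 1 := by
    rw [Matrix.smul_single, smul_eq_mul, mul_one]
  rw [this, map_smul, matGrad, smul_eq_mul]

lemma numeric (M₁ M₂ : ℝ) (hM₁ : 0 < M₁) (hM₂ : 0 < M₂) {n : ℕ} (hN : 1 ≤ n) :
    64 * M₁ + 76 * Real.sqrt M₂
      ≤ 2 * (5 * Real.sqrt (6 * M₂ * ((n : ℝ) + 2))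
          + Real.sqrt (2 * M₂ + 48 * M₁ ^ 2 * ((n : ℝ) + 2))
            * (Real.sqrt (2 * ((n : ℝ) + 60)) + 8 * Real.sqrt (6 * n * ((n : ℝ) + 2)))) := by
  have hn1 : (1 : ℝ) ≤ (n : ℝ) := by exact_mod_cast hN
  have h11 : (11 : ℝ) ≤ Real.sqrt (2 * ((n : ℝ) + 60)) :=
    (Real.le_sqrt' (by norm_num)).mpr (by nlinarith)
  have h338 : (33 / 8 : ℝ) ≤ Real.sqrt (6 * n * ((n : ℝ) + 2)) :=
    (Real.le_sqrt' (by norm_num)).mpr (by nlinarith)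
  have hF : (44 : ℝ) ≤ Real.sqrt (2 * ((n : ℝ) + 60)) + 8 * Real.sqrt (6 * n * ((n : ℝ) + 2)) := by
    nlinarith [h11, h338]
  set x0 := Real.sqrt (2 * M₂ + 144 * M₁ ^ 2) with hx0def
  set x := Real.sqrt (2 * M₂ + 48 * M₁ ^ 2 * ((n : ℝ) + 2)) with hxdef
  have hx00 : 0 ≤ x0 := Real.sqrt_nonneg _
  have hx0 : 0 ≤ x := Real.sqrt_nonneg _
  have hxx : x0 ≤ x := Real.sqrt_le_sqrt (by nlinarith [sq_nonneg M₁])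
  have ha : Real.sqrt (2 * M₂) = Real.sqrt 2 * Real.sqrt M₂ := Real.sqrt_mul (by norm_num) _
  have hs0 : 0 ≤ Real.sqrt M₂ := Real.sqrt_nonneg _
  have ha2 : Real.sqrt (2 * M₂) ^ 2 = 2 * M₂ := Real.sq_sqrt (by positivity)
  have ha0 : 0 ≤ Real.sqrt (2 * M₂) := Real.sqrt_nonneg _
  have hkey : 2 * (Real.sqrt (2 * M₂) + 12 * M₁) ≤ 3 * x0 := by
    have h23 : (0 : ℝ) ≤ 2 * (Real.sqrt (2 * M₂) + 12 * M₁) / 3 := by positivity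
    have hq : (2 * (Real.sqrt (2 * M₂) + 12 * M₁) / 3) ^ 2 ≤ 2 * M₂ + 144 * M₁ ^ 2 := by
      nlinarith [sq_nonneg (Real.sqrt (2 * M₂) - 12 * M₁), ha2, mul_nonneg ha0 hM₁.le]
    have h44 := (Real.le_sqrt h23 (by positivity : (0:ℝ) ≤ 2 * M₂ + 144 * M₁ ^ 2)).mpr hq
    rw [← hx0def] at h44
    linarith
  have h141 : (1.41 : ℝ) ≤ Real.sqrt 2 := (Real.le_sqrt' (by norm_num)).mpr (by norm_num)
  have hT1 : (0 : ℝ) ≤ 5 * Real.sqrt (6 * M₂ * ((n : ℝ) + 2)) := by positivity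
  have p1 : x * 44 ≤ x * (Real.sqrt (2 * ((n : ℝ) + 60)) + 8 * Real.sqrt (6 * n * ((n : ℝ) + 2))) :=
    mul_le_mul_of_nonneg_left hF hx0
  have p2 : 1.41 * Real.sqrt M₂ ≤ Real.sqrt 2 * Real.sqrt M₂ :=
    mul_le_mul_of_nonneg_right h141 hs0
  rw [ha] at hkey
  linarith [p1, p2, hkey, hxx, hT1, hM₁.le]

end SGDAux

/-- Smoothness along the SGD ray: if `∇f` is `M₁`-Lipschitz and has squared Frobenius norm
at most `M₂` on the orthogonal group, `‖v⁽ˡ⁾‖₂ > A` and `⟨v⁽ˡ⁾, d⁽ˡ⁾⟩ = 0` for all `l`,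
then `h(η) = f(H(v⁽¹⁾ − η d⁽¹⁾) ⋯ H(v⁽ᴸ⁾ − η d⁽ᴸ⁾))` is differentiable at every `η ≥ 0`
and `|h′(η) − h′(0)| ≤ C (∑_l ‖d⁽ˡ⁾‖₂²) η` with
`C = (2L/A²)(5√(6M₂(N+2)) + √(2M₂ + 48M₁²(N+2))(√(2(N+60)) + 8√(6N(N+2))))`. -/
theorem sgd_ray_gradient_lipschitz {N L : ℕ} (A : ℝ) (hA : 0 < A)
    (f : Matrix (Fin N) (Fin N) ℝ → ℝ) (hf : Differentiable ℝ f)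
    (M₁ : ℝ) (hM₁ : 0 < M₁)
    (hLip : ∀ X' X'' : Matrix (Fin N) (Fin N) ℝ, X'ᵀ * X' = 1 → X''ᵀ * X'' = 1 →
      frob (matGrad f X' - matGrad f X'') ≤ M₁ * frob (X' - X''))
    (M₂ : ℝ) (hM₂ : 0 < M₂)
    (hBnd : ∀ X : Matrix (Fin N) (Fin N) ℝ, Xᵀ * X = 1 →
      ∑ i, ∑ j, matGrad f X i j ^ 2 ≤ M₂)
    (v d : Fin L → Fin N → ℝ)
    (hv : ∀ l, A < Real.sqrt (∑ k, v l k ^ 2))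
    (hd : ∀ l, ∑ k, v l k * d l k = 0) :
    ∀ η : ℝ, 0 ≤ η →
      DifferentiableAt ℝ
        (fun t : ℝ => f (prodHouseholder fun l k => v l k - t * d l k)) η ∧
      |deriv (fun t : ℝ => f (prodHouseholder fun l k => v l k - t * d l k)) η
          - deriv (fun t : ℝ => f (prodHouseholder fun l k => v l k - t * d l k)) 0|
        ≤ (2 * L / A ^ 2) * (5 * Real.sqrt (6 * M₂ * ((N : ℝ) + 2))
              + Real.sqrt (2 * M₂ + 48 * M₁ ^ 2 * ((N : ℝ) + 2))
                * (Real.sqrt (2 * ((N : ℝ) + 60)) + 8 * Real.sqrt (6 * N * ((N : ℝ) + 2))))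
            * (∑ l, ∑ k, d l k ^ 2) * η := by
  have hv' : ∀ l, A ^ 2 < ∑ k, v l k ^ 2 := fun l => (Real.lt_sqrt hA.le).mp (hv l)
  obtain ⟨P', hP⟩ := SGDAux.prod_lemma A hA L v d hv' hd
  intro η hη
  have hderiv : ∀ t : ℝ,
      HasDerivAt (fun s : ℝ => f (prodHouseholder fun l k => v l k - s * d l k))
        (∑ i, ∑ j, P' t i j
          * matGrad f (prodHouseholder fun l k => v l k - t * d l k) i j) t := by
    intro t
    have h1 := (hf (prodHouseholder fun l k => v l k - t * d l k)).hasFDerivAt.comp_hasDerivAt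
      t (hP t).1
    exact h1.congr_deriv (SGDAux.fderiv_pairing _ _ _)
  refine ⟨(hderiv η).differentiableAt, ?_⟩
  rw [(hderiv η).deriv, (hderiv 0).deriv]
  set E := 5 * Real.sqrt (6 * M₂ * ((N : ℝ) + 2))
      + Real.sqrt (2 * M₂ + 48 * M₁ ^ 2 * ((N : ℝ) + 2))
        * (Real.sqrt (2 * ((N : ℝ) + 60)) + 8 * Real.sqrt (6 * N * ((N : ℝ) + 2))) with hEdef
  set Pη := prodHouseholder fun l k => v l k - η * d l k with hPηdef
  set P0 := prodHouseholder fun l k => v l k - 0 * d l k with hP0def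
  set Gη := matGrad f Pη with hGηdef
  set G0 := matGrad f P0 with hG0def
  set S := ∑ l, Real.sqrt (∑ k, d l k ^ 2) with hSdef
  set Q := ∑ l, ∑ k, d l k ^ 2 with hQdef
  obtain ⟨-, hoη, hnη, hdiffη, hddη⟩ := hP η
  have ho0 : P0ᵀ * P0 = 1 := (hP 0).2.1
  have habsη : |η| = η := abs_of_nonneg hη
  have hS0 : 0 ≤ S := Finset.sum_nonneg fun _ _ => Real.sqrt_nonneg _
  have hQ0 : 0 ≤ Q := Finset.sum_nonneg fun _ _ =>
    Finset.sum_nonneg fun _ _ => sq_nonneg _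
  have hsplit : (∑ i, ∑ j, P' η i j * Gη i j) - ∑ i, ∑ j, P' 0 i j * G0 i j
      = (∑ i, ∑ j, (Gη - G0) i j * P' η i j)
        + ∑ i, ∑ j, G0 i j * (P' η - P' 0) i j := by
    rw [← Finset.sum_add_distrib, ← Finset.sum_sub_distrib]
    refine Finset.sum_congr rfl fun i _ => ?_
    rw [← Finset.sum_add_distrib, ← Finset.sum_sub_distrib]
    refine Finset.sum_congr rfl fun j _ => ?_
    simp only [Matrix.sub_apply]
    ring
  rw [hsplit]
  have c1 : |∑ i, ∑ j, (Gη - G0) i j * P' η i j| ≤ ‖Gη - G0‖ * ‖P' η‖ := SGDAux.cs2 _ _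
  have c2 : |∑ i, ∑ j, G0 i j * (P' η - P' 0) i j| ≤ ‖G0‖ * ‖P' η - P' 0‖ := SGDAux.cs2 _ _
  have lip : ‖Gη - G0‖ ≤ M₁ * (8 / A * S * η) := by
    have h3 := hLip Pη P0 hoη ho0
    rw [SGDAux.frob_eq_norm, SGDAux.frob_eq_norm] at h3
    refine le_trans h3 ?_
    have h2 := hdiffη
    rw [habsη] at h2
    exact mul_le_mul_of_nonneg_left h2 hM₁.le
  have bnd0 : ‖G0‖ ≤ Real.sqrt M₂ := by
    rw [SGDAux.norm_eq]
    exact Real.sqrt_le_sqrt (hBnd P0 ho0)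
  have hdd : ‖P' η - P' 0‖ ≤ (12 / A ^ 2 * Q + (8 / A * S) ^ 2) * η := by
    have h4 := hddη
    rw [habsη] at h4
    exact h4
  have hb0 : (0:ℝ) ≤ 8 / A * S := mul_nonneg (div_nonneg (by norm_num) hA.le) hS0
  calc |(∑ i, ∑ j, (Gη - G0) i j * P' η i j)
        + ∑ i, ∑ j, G0 i j * (P' η - P' 0) i j|
      ≤ |∑ i, ∑ j, (Gη - G0) i j * P' η i j|
        + |∑ i, ∑ j, G0 i j * (P' η - P' 0) i j| := abs_add_le _ _
    _ ≤ ‖Gη - G0‖ * ‖P' η‖ + ‖G0‖ * ‖P' η - P' 0‖ := add_le_add c1 c2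
    _ ≤ (M₁ * (8 / A * S * η)) * (8 / A * S)
        + Real.sqrt M₂ * ((12 / A ^ 2 * Q + (8 / A * S) ^ 2) * η) :=
        add_le_add
          (mul_le_mul lip hnη (norm_nonneg _)
            (mul_nonneg hM₁.le (mul_nonneg hb0 hη)))
          (mul_le_mul bnd0 hdd (norm_nonneg _) (Real.sqrt_nonneg _))
    _ ≤ 2 * ↑L / A ^ 2 * E * Q * η := by
        have hA2 : (0:ℝ) < A ^ 2 := pow_pos hA 2
        suffices hco : M₁ * (8 / A * S) * (8 / A * S)
            + Real.sqrt M₂ * (12 / A ^ 2 * Q + (8 / A * S) ^ 2) ≤ 2 * ↑L / A ^ 2 * E * Q by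
          calc (M₁ * (8 / A * S * η)) * (8 / A * S)
              + Real.sqrt M₂ * ((12 / A ^ 2 * Q + (8 / A * S) ^ 2) * η)
              = (M₁ * (8 / A * S) * (8 / A * S)
                + Real.sqrt M₂ * (12 / A ^ 2 * Q + (8 / A * S) ^ 2)) * η := by ring
            _ ≤ (2 * ↑L / A ^ 2 * E * Q) * η := mul_le_mul_of_nonneg_right hco hη
        rcases Nat.eq_zero_or_pos L with hL | hL
        · have hS' : S = 0 := by rw [hSdef]; subst hL; simp
          have hQ' : Q = 0 := by rw [hQdef]; subst hL; simp
          rw [hS', hQ']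
          norm_num
        rcases Nat.eq_zero_or_pos N with hN | hN
        · have hS' : S = 0 := by rw [hSdef]; subst hN; simp
          have hQ' : Q = 0 := by rw [hQdef]; subst hN; simp
          rw [hS', hQ']
          norm_num
        have hnum := SGDAux.numeric M₁ M₂ hM₁ hM₂ hN
        rw [← hEdef] at hnum
        have hL1 : (1:ℝ) ≤ (L:ℝ) := by exact_mod_cast hL
        have hE0 : (0:ℝ) ≤ E := by
          rw [hEdef]; positivity
        have hSQ : S ^ 2 ≤ (L:ℝ) * Q := by
          have h := sq_sum_le_card_mul_sum_sq (s := (Finset.univ : Finset (Fin L)))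
            (f := fun l => Real.sqrt (∑ k, d l k ^ 2))
          rw [Finset.card_univ, Fintype.card_fin] at h
          refine le_trans h (le_of_eq ?_)
          congr 1
          exact Finset.sum_congr rfl fun l _ => Real.sq_sqrt (by positivity)
        have key : 64 * M₁ * S ^ 2 + 12 * Real.sqrt M₂ * Q + 64 * Real.sqrt M₂ * S ^ 2
            ≤ 2 * ↑L * E * Q := by
          have k1 : 64 * M₁ * S ^ 2 ≤ 64 * M₁ * ((L:ℝ) * Q) :=
            mul_le_mul_of_nonneg_left hSQ (mul_nonneg (by norm_num) hM₁.le)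
          have k2 : 64 * Real.sqrt M₂ * S ^ 2 ≤ 64 * Real.sqrt M₂ * ((L:ℝ) * Q) :=
            mul_le_mul_of_nonneg_left hSQ (mul_nonneg (by norm_num) (Real.sqrt_nonneg _))
          have hQL : Q ≤ (L:ℝ) * Q := le_mul_of_one_le_left hQ0 hL1
          have k3 : 12 * Real.sqrt M₂ * Q ≤ 12 * Real.sqrt M₂ * ((L:ℝ) * Q) :=
            mul_le_mul_of_nonneg_left hQL (mul_nonneg (by norm_num) (Real.sqrt_nonneg _))
          have k4 : ((L:ℝ) * Q) * (64 * M₁ + 76 * Real.sqrt M₂) ≤ ((L:ℝ) * Q) * (2 * E) :=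
            mul_le_mul_of_nonneg_left hnum (mul_nonneg (Nat.cast_nonneg L) hQ0)
          linarith [k1, k2, k3, k4]
        have heq : M₁ * (8 / A * S) * (8 / A * S)
            + Real.sqrt M₂ * (12 / A ^ 2 * Q + (8 / A * S) ^ 2)
            = (64 * M₁ * S ^ 2 + 12 * Real.sqrt M₂ * Q + 64 * Real.sqrt M₂ * S ^ 2) / A ^ 2 := by
          field_simp
          ring
        have heq2 : 2 * (L:ℝ) / A ^ 2 * E * Q = (2 * ↑L * E * Q) / A ^ 2 := by ring
        rw [heq, heq2]
        exact div_le_div_of_nonneg_right key hA2.le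
end
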